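/- arXiv:2603.08552 — 10 statements merged into one kernel-verified Lean document; each statement's English description precedes it below -/
import Mathlib

section
/- Let ŷ be the unique root of Δℒ in (0, δ·C^{α−1}), and define X(y) = h(y) for 0 < y < ŷ and X(y) = 0 for y ≥ ŷ. Then for every y > 0, X(y) maximizes the Lagrangian ℒ(y,·) over [0,∞): for all x ≥ 0, u(g(x)) − y·x ≤ u(g(X(y))) − y·X(y), where g(0) = C so that u(g(X(y))) − y·X(y) = u(C) when y ≥ ŷ. -/
open Real Set

/-- Bernoulli-type inequality: for `t > 0` and `α < 1`, `α ≠ 0`,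
`(t ^ α - 1) / α ≤ t - 1`. -/
lemma bern_div {α t : ℝ} (hα : α < 1) (hα0 : α ≠ 0) (ht : 0 < t) :
    (t ^ α - 1) / α ≤ t - 1 := by
  rcases lt_or_gt_of_ne hα0 with hneg | hpos
  · -- α < 0 : t ^ α ≥ 1 + α * (t - 1)
    have h1 : 1 + α * (t - 1) ≤ t ^ α := by
      have hlog : Real.log t ≤ t - 1 := Real.log_le_sub_one_of_pos ht
      have h2 : α * (t - 1) ≤ α * Real.log t := by nlinarith
      have h3 : α * Real.log t + 1 ≤ Real.exp (α * Real.log t) :=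
        Real.add_one_le_exp _
      have h4 : Real.exp (α * Real.log t) = t ^ α := by
        rw [Real.rpow_def_of_pos ht, mul_comm]
      linarith
    rw [div_le_iff_of_neg hneg]
    nlinarith
  · -- 0 < α < 1 : t ^ α ≤ 1 + α * (t - 1)
    have h1 : t ^ α ≤ 1 + α * (t - 1) := by
      have := rpow_one_add_le_one_add_mul_self (s := t - 1) (by linarith)
        (le_of_lt hpos) (le_of_lt hα)
      simpa using this
    rw [div_le_iff₀ hpos]
    nlinarith

/-- Tangent-line (concavity) inequality for the power utility. -/
lemma tangent_line {α a b : ℝ} (hα : α < 1) (hα0 : α ≠ 0) (ha : 0 < a) (hb : 0 < b) :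
    b ^ α / α - a ^ α / α ≤ a ^ (α - 1) * (b - a) := by
  have ht : (0:ℝ) < b / a := div_pos hb ha
  have hbα : b ^ α = a ^ α * (b / a) ^ α := by
    rw [← Real.mul_rpow ha.le (div_nonneg hb.le ha.le), mul_div_cancel₀ _ ha.ne']
  have haα : a ^ (α - 1) = a ^ α / a := by
    rw [Real.rpow_sub ha, Real.rpow_one]
  have haαpos : 0 < a ^ α := Real.rpow_pos_of_pos ha α
  have key := bern_div hα hα0 ht
  have : a ^ α * (((b/a) ^ α - 1) / α) ≤ a ^ α * (b / a - 1) :=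
    mul_le_mul_of_nonneg_left key haαpos.le
  rw [hbα, haα]
  have hane : a ≠ 0 := ha.ne'
  calc a ^ α * (b / a) ^ α / α - a ^ α / α
      = a ^ α * (((b/a) ^ α - 1) / α) := by ring
    _ ≤ a ^ α * (b / a - 1) := this
    _ = a ^ α / a * (b - a) := by field_simp

/-- with yhat the unique root of Δℒ in (0, δ·C^{α−1}) and
X(y) = h(y) for 0 < y < yhat, X(y) = 0 for y ≥ yhat, the value X(y) maximizes
the Lagrangian ℒ(y,·) = u(g(·)) − y·(·) over [0,∞) for every y > 0;
moreover g(0) = C, so the maximal value is u(C) when y ≥ yhat. -/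
theorem stmt0
    (α δ K C : ℝ) (hα : α < 1) (hα0 : α ≠ 0) (hδ : δ ∈ Set.Ioc (0:ℝ) 1)
    (hK : 0 < K) (hC : 0 < C)
    (u : ℝ → ℝ) (hu : ∀ x, u x = x ^ α / α)
    (g : ℝ → ℝ) (hg : ∀ x, g x = δ * max (x - K) 0 + C)
    (I : ℝ → ℝ) (hI : ∀ x, I x = x ^ (1 / (α - 1)))
    (h : ℝ → ℝ) (hh : ∀ y, h y = (I (y / δ) - C) / δ + K)
    (ΔL : ℝ → ℝ) (hΔL : ∀ y, ΔL y = u (g (h y)) - u C - y * h y)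
    (yhat : ℝ) (hyhatmem : yhat ∈ Set.Ioo 0 (δ * C ^ (α - 1)))
    (hroot : ΔL yhat = 0)
    (huniq : ∀ y ∈ Set.Ioo 0 (δ * C ^ (α - 1)), ΔL y = 0 → y = yhat)
    (X : ℝ → ℝ) (hX : ∀ y, X y = if y < yhat then h y else 0) :
    (∀ y > 0, ∀ x ≥ 0, u (g x) - y * x ≤ u (g (X y)) - y * X y) ∧
      g 0 = C ∧ (∀ y, yhat ≤ y → u (g (X y)) - y * X y = u C) := by
  obtain ⟨hδ0, hδ1⟩ := hδ
  obtain ⟨hyhat0, hyhaty0⟩ := hyhatmem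
  set y0 : ℝ := δ * C ^ (α - 1) with hy0def
  have hα1 : α - 1 ≠ 0 := by intro hcon; apply hα.ne; linarith
  have hCpow : (0:ℝ) < C ^ (α - 1) := Real.rpow_pos_of_pos hC _
  have hy00 : 0 < y0 := mul_pos hδ0 hCpow
  -- g 0 = C
  have g0 : g 0 = C := by
    rw [hg]; rw [max_eq_right (by linarith)]; ring
  -- basic facts about a(y) := (y/δ)^(1/(α-1)) for 0 < y ≤ y0
  have hfacts : ∀ y : ℝ, 0 < y → y ≤ y0 →
      K ≤ h y ∧ g (h y) = (y/δ) ^ (1/(α-1)) ∧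
        ((y/δ) ^ (1/(α-1))) ^ (α - 1) = y/δ ∧ 0 < (y/δ) ^ (1/(α-1)) := by
    intro y hy hyle
    set z : ℝ := y / δ with hz
    have hz0 : 0 < z := div_pos hy hδ0
    set a : ℝ := z ^ (1/(α-1)) with hadef
    have ha0 : 0 < a := Real.rpow_pos_of_pos hz0 _
    have hzC : z ≤ C ^ (α - 1) := by
      rw [hz, div_le_iff₀ hδ0]
      calc y ≤ y0 := hyle
        _ = C ^ (α - 1) * δ := by rw [hy0def]; ring
    have hCa : C ≤ a := by
      have hinv : (1:ℝ)/(α-1) ≤ 0 := by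
        apply div_nonpos_of_nonneg_of_nonpos zero_le_one (by linarith)
      have := Real.rpow_le_rpow_of_nonpos hz0 hzC hinv
      calc C = (C ^ (α-1)) ^ ((1:ℝ)/(α-1)) := by
              rw [← Real.rpow_mul hC.le, mul_one_div, div_self hα1, Real.rpow_one]
        _ ≤ z ^ ((1:ℝ)/(α-1)) := this
        _ = a := rfl
    have hIy : I (y/δ) = a := by rw [hI]
    have hhy : h y = (a - C)/δ + K := by rw [hh, hIy]
    have hKh : K ≤ h y := by
      rw [hhy]
      have : 0 ≤ (a - C)/δ := div_nonneg (by linarith) hδ0.le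
      linarith
    have hghy : g (h y) = a := by
      have h1 : h y - K = (a - C)/δ := by rw [hhy]; ring
      rw [hg, h1, max_eq_left (div_nonneg (by linarith) hδ0.le)]
      field_simp
      ring
    have hpow : a ^ (α - 1) = z := by
      rw [hadef, ← Real.rpow_mul hz0.le, one_div, inv_mul_cancel₀ hα1, Real.rpow_one]
    exact ⟨hKh, hghy, hpow, ha0⟩
  -- key: for 0 < y ≤ y0 and x ≥ K, the Lagrangian at x is ≤ at h y
  have key : ∀ y : ℝ, 0 < y → y ≤ y0 → ∀ x : ℝ, K ≤ x →
      u (g x) - y * x ≤ u (g (h y)) - y * h y := by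
    intro y hy hyle x hx
    obtain ⟨hKh, hghy, hpow, ha0⟩ := hfacts y hy hyle
    set a : ℝ := (y/δ) ^ (1/(α-1)) with hadef
    have hgx : g x = δ * (x - K) + C := by
      rw [hg, max_eq_left (by linarith)]
    have hgx0 : 0 < g x := by
      rw [hgx]; nlinarith
    have htan := tangent_line (a := a) (b := g x) hα hα0 ha0 hgx0
    rw [hpow] at htan
    -- u (g x) - u a ≤ (y/δ) * (g x - a)
    have hu1 : u (g x) = (g x) ^ α / α := hu _
    have hu2 : u (g (h y)) = a ^ α / α := by rw [hu, hghy]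
    -- compute (y/δ) * (g x - a) = y * (x - h y)
    have hhy : h y = (a - C)/δ + K := by
      rw [hh, hI]
    have hcalc : y/δ * (g x - a) = y * (x - h y) := by
      rw [hgx, hhy]; field_simp; ring
    rw [hu1, hu2]
    rw [hcalc] at htan
    linarith
  -- strict antitonicity of ΔL on (0, y0]
  have anti : ∀ y1 y2 : ℝ, 0 < y1 → y1 < y2 → y2 ≤ y0 → ΔL y2 < ΔL y1 := by
    intro y1 y2 hy1 h12 hy2
    obtain ⟨hKh2, _, _, _⟩ := hfacts y2 (by linarith) hy2
    have hkey := key y1 hy1 (by linarith) (h y2) hKh2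
    have e1 : ΔL y1 = u (g (h y1)) - u C - y1 * h y1 := hΔL _
    have e2 : ΔL y2 = u (g (h y2)) - u C - y2 * h y2 := hΔL _
    have hpos : 0 < (y2 - y1) * h y2 := by
      apply mul_pos (by linarith) (by linarith)
    nlinarith [hkey]
  -- sign of ΔL
  have sign_pos : ∀ y : ℝ, 0 < y → y < yhat → 0 < ΔL y := by
    intro y hy hlt
    have := anti y yhat hy hlt (le_of_lt hyhaty0)
    rw [hroot] at this; exact this
  have sign_nonpos : ∀ y : ℝ, yhat ≤ y → y ≤ y0 → ΔL y ≤ 0 := by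
    intro y hy hyle
    rcases eq_or_lt_of_le hy with heq | hlt
    · rw [← heq, hroot]
    · have := anti yhat y hyhat0 hlt hyle
      rw [hroot] at this; linarith
  refine ⟨?_, g0, ?_⟩
  · intro y hy x hx
    rw [hX]
    by_cases hycase : y < yhat
    · simp only [if_pos hycase]
      have hyle : y ≤ y0 := by linarith
      by_cases hxK : K ≤ x
      · exact key y hy hyle x hxK
      · -- x < K : g x = C, value ≤ u C ≤ u C + ΔL y
        have hgx : g x = C := by
          rw [hg, max_eq_right (by linarith)]; ring
        have hΔ : 0 < ΔL y := sign_pos y hy hycase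
        have e : ΔL y = u (g (h y)) - u C - y * h y := hΔL _
        have hyx : 0 ≤ y * x := mul_nonneg hy.le hx
        rw [hgx]
        linarith
    · simp only [if_neg hycase]
      push_neg at hycase
      rw [g0, mul_zero, sub_zero]
      by_cases hxK : K ≤ x
      · by_cases hyle : y ≤ y0
        · have hkey := key y hy hyle x hxK
          have hΔ : ΔL y ≤ 0 := sign_nonpos y hycase hyle
          have e : ΔL y = u (g (h y)) - u C - y * h y := hΔL _
          linarith
        · push_neg at hyle
          have hkey := key y0 hy00 le_rfl x hxK
          have hΔ : ΔL y0 ≤ 0 := sign_nonpos y0 (le_of_lt hyhaty0) le_rfl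
          have e : ΔL y0 = u (g (h y0)) - u C - y0 * h y0 := hΔL _
          have hmono : u (g x) - y * x ≤ u (g x) - y0 * x := by
            have : y0 * x ≤ y * x := mul_le_mul_of_nonneg_right hyle.le hx
            linarith
          linarith
      · have hgx : g x = C := by
          rw [hg, max_eq_right (by linarith)]; ring
        have hyx : 0 ≤ y * x := mul_nonneg hy.le hx
        rw [hgx]; linarith
  · intro y hy
    rw [hX, if_neg (not_lt.mpr hy), g0, mul_zero, sub_zero]
end

section
/- The function X is nonincreasing on (0,∞) and strictly decreasing on (0, ŷ); it is continuous on (0,∞) except at ŷ, where it jumps from the left limit h(ŷ) > K > 0 down to X(ŷ) = 0; moreover X(y) → +∞ as y → 0⁺ and X(y) = 0 for all y ≥ ŷ. -/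
open Real Set Filter Topology

/-- X is nonincreasing on (0,∞), strictly decreasing on (0,ŷ),
continuous at every point of (0,∞) other than ŷ, has left limit h(ŷ) > K > 0
at ŷ while X(ŷ) = 0, tends to +∞ as y → 0⁺, and vanishes on [ŷ,∞). -/
theorem stmt2
    (α δ K C : ℝ) (hα : α < 1) (hα0 : α ≠ 0) (hδ : δ ∈ Set.Ioc (0:ℝ) 1)
    (hK : 0 < K) (hC : 0 < C)
    (u : ℝ → ℝ) (hu : ∀ x, u x = x ^ α / α)
    (g : ℝ → ℝ) (hg : ∀ x, g x = δ * max (x - K) 0 + C)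
    (I : ℝ → ℝ) (hI : ∀ x, I x = x ^ (1 / (α - 1)))
    (h : ℝ → ℝ) (hh : ∀ y, h y = (I (y / δ) - C) / δ + K)
    (ΔL : ℝ → ℝ) (hΔL : ∀ y, ΔL y = u (g (h y)) - u C - y * h y)
    (yhat : ℝ) (hyhatmem : yhat ∈ Set.Ioo 0 (δ * C ^ (α - 1)))
    (hroot : ΔL yhat = 0)
    (huniq : ∀ y ∈ Set.Ioo 0 (δ * C ^ (α - 1)), ΔL y = 0 → y = yhat)
    (X : ℝ → ℝ) (hX : ∀ y, X y = if y < yhat then h y else 0) :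
    AntitoneOn X (Set.Ioi 0) ∧
      StrictAntiOn X (Set.Ioo 0 yhat) ∧
      (∀ y, 0 < y → y ≠ yhat → ContinuousAt X y) ∧
      Tendsto X (nhdsWithin yhat (Set.Iio yhat)) (nhds (h yhat)) ∧
      K < h yhat ∧ X yhat = 0 ∧
      Tendsto X (nhdsWithin 0 (Set.Ioi 0)) atTop ∧
      (∀ y, yhat ≤ y → X y = 0) := by
  obtain ⟨hδ0, hδ1⟩ := hδ
  obtain ⟨hy0, hyub⟩ := hyhatmem
  have hα1 : α - 1 < 0 := by linarith
  have hcneg : 1 / (α - 1) < 0 := div_neg_of_pos_of_neg one_pos hα1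
  have hfun : h = fun y => ((y / δ) ^ (1 / (α - 1)) - C) / δ + K := by
    funext y; rw [hh, hI]
  -- strict antitonicity of h on (0,∞)
  have hanti : StrictAntiOn h (Set.Ioi 0) := by
    intro x hx y hy hxy
    simp only [Set.mem_Ioi] at hx hy
    simp only [hfun]
    have key : (y / δ) ^ (1 / (α - 1)) < (x / δ) ^ (1 / (α - 1)) :=
      Real.rpow_lt_rpow_of_neg (by positivity) (by gcongr) hcneg
    gcongr
  -- h yhat > K
  have hhK : K < h yhat := by
    have h1 : yhat / δ < C ^ (α - 1) := by
      rw [div_lt_iff₀ hδ0]; linarith [hyub, mul_comm δ (C ^ (α - 1))]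
    have h2 : (C ^ (α - 1)) ^ (1 / (α - 1)) < (yhat / δ) ^ (1 / (α - 1)) :=
      Real.rpow_lt_rpow_of_neg (by positivity) h1 hcneg
    have h3' : (C ^ (α - 1)) ^ (1 / (α - 1)) = C := by
      rw [← Real.rpow_mul hC.le, mul_one_div, div_self hα1.ne, Real.rpow_one]
    simp only [hfun]
    have h5 : C < (yhat / δ) ^ (1 / (α - 1)) := h3' ▸ h2
    have h6 : 0 < ((yhat / δ) ^ (1 / (α - 1)) - C) / δ :=
      div_pos (by linarith) hδ0
    linarith
  -- h y > K for 0 < y < yhat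
  have hpos : ∀ y, 0 < y → y < yhat → K < h y := by
    intro y hy hylt
    exact lt_trans hhK (hanti (Set.mem_Ioi.2 hy) (Set.mem_Ioi.2 hy0) hylt)
  -- continuity of h at positive points
  have hcont : ∀ y : ℝ, 0 < y → ContinuousAt h y := by
    intro y hy
    rw [hfun]
    have h1 : ContinuousAt (fun y : ℝ => (y / δ) ^ (1 / (α - 1))) y := by
      have h3 : ContinuousAt (fun z : ℝ => z / δ) y := continuousAt_id.div_const δ
      exact h3.rpow_const (Or.inl (ne_of_gt (by positivity)))
    exact ((h1.sub continuousAt_const).div_const δ).add continuousAt_const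
  refine ⟨?_, ?_, ?_, ?_, hhK, ?_, ?_, ?_⟩
  · -- AntitoneOn X (Ioi 0)
    intro a ha b hb hab
    simp only [Set.mem_Ioi] at ha hb
    rw [hX, hX]
    by_cases hbY : b < yhat
    · have haY : a < yhat := lt_of_le_of_lt hab hbY
      rw [if_pos haY, if_pos hbY]
      rcases eq_or_lt_of_le hab with rfl | hab'
      · exact le_refl _
      · exact (hanti (Set.mem_Ioi.2 ha) (Set.mem_Ioi.2 hb) hab').le
    · rw [if_neg hbY]
      by_cases haY : a < yhat
      · rw [if_pos haY]; exact le_of_lt (lt_trans hK (hpos a ha haY))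
      · rw [if_neg haY]
  · -- StrictAntiOn X (Ioo 0 yhat)
    intro a ha b hb hab
    rw [hX, hX, if_pos ha.2, if_pos hb.2]
    exact hanti (Set.mem_Ioi.2 ha.1) (Set.mem_Ioi.2 hb.1) hab
  · -- continuity away from yhat
    intro y hy hne
    rcases lt_or_gt_of_ne hne with hlt | hgt
    · have : ∀ᶠ z in 𝓝 y, X z = h z := by
        filter_upwards [eventually_lt_nhds hlt] with z hz
        rw [hX, if_pos hz]
      exact (hcont y hy).congr (this.mono fun z hz => hz.symm)
    · have : ∀ᶠ z in 𝓝 y, X z = 0 := by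
        filter_upwards [eventually_gt_nhds hgt] with z hz
        rw [hX, if_neg (not_lt.2 hz.le)]
      exact continuousAt_const.congr (this.mono fun z hz => hz.symm)
  · -- left limit at yhat
    have heq : ∀ᶠ z in 𝓝[<] yhat, X z = h z := by
      filter_upwards [self_mem_nhdsWithin] with z hz
      rw [hX, if_pos (Set.mem_Iio.1 hz)]
    exact Tendsto.congr' (heq.mono fun z hz => hz.symm)
      (((hcont yhat hy0).tendsto).mono_left nhdsWithin_le_nhds)
  · rw [hX, if_neg (lt_irrefl yhat)]
  · -- tendsto atTop as y → 0+
    have heq : ∀ᶠ z in 𝓝[>] (0:ℝ), X z = h z := by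
      have hmem : Set.Ioo (0:ℝ) yhat ∈ 𝓝[>] (0:ℝ) :=
        Ioo_mem_nhdsGT_of_mem ⟨le_refl 0, hy0⟩
      filter_upwards [hmem] with z hz
      rw [hX, if_pos hz.2]
    have htend : Tendsto h (𝓝[>] (0:ℝ)) atTop := by
      rw [hfun]
      have h1 : Tendsto (fun z : ℝ => z / δ) (𝓝[>] (0:ℝ)) (𝓝[>] (0:ℝ)) := by
        rw [tendsto_nhdsWithin_iff]
        constructor
        · have : Tendsto (fun z : ℝ => z / δ) (𝓝 (0:ℝ)) (𝓝 (0 / δ)) :=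
            (continuous_id.div_const δ).tendsto 0
          simpa using this.mono_left nhdsWithin_le_nhds
        · filter_upwards [self_mem_nhdsWithin] with z hz
          exact div_pos hz hδ0
      have h2 : Tendsto (fun t : ℝ => t ^ (1 / (α - 1))) (𝓝[>] (0:ℝ)) atTop := by
        have h3 : Tendsto (fun t : ℝ => (t⁻¹) ^ (-(1 / (α - 1)))) (𝓝[>] (0:ℝ)) atTop :=
          (tendsto_rpow_atTop (by linarith)).comp tendsto_inv_nhdsGT_zero
        refine h3.congr' ?_
        filter_upwards [self_mem_nhdsWithin] with t ht
        rw [Real.inv_rpow (le_of_lt ht), Real.rpow_neg (le_of_lt ht), inv_inv]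
      have h4 : Tendsto (fun z : ℝ => (z / δ) ^ (1 / (α - 1))) (𝓝[>] (0:ℝ)) atTop :=
        h2.comp h1
      exact tendsto_atTop_add_const_right _ K
        ((tendsto_atTop_add_const_right _ (-C) h4).atTop_div_const hδ0 |>.congr
          (fun z => by ring_nf))
    exact htend.congr' (heq.mono fun z hz => hz.symm)
  · intro y hy
    rw [hX, if_neg (not_lt.2 hy)]
end

section
/- For every y ≥ δ·C^{α−1}, the function x ↦ ℒ(y,x) = u(g(x)) − y·x is strictly decreasing on [0,∞); in particular, for every x > 0 one has u(g(x)) − y·x < u(C) = ℒ(y,0), so x = 0 is the unique maximizer of ℒ(y,·) on [0,∞). -/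
open Real Set

/-- for y ≥ δ·C^{α−1}, x ↦ ℒ(y,x) = u(g(x)) − y·x is strictly
decreasing on [0,∞); in particular ℒ(y,x) < u(C) = ℒ(y,0) for every x > 0,
so x = 0 is the unique maximizer of ℒ(y,·) on [0,∞). -/
theorem stmt3
    (α δ K C : ℝ) (hα : α < 1) (hα0 : α ≠ 0) (hδ : δ ∈ Set.Ioc (0:ℝ) 1)
    (hK : 0 < K) (hC : 0 < C)
    (u : ℝ → ℝ) (hu : ∀ x, u x = x ^ α / α)
    (g : ℝ → ℝ) (hg : ∀ x, g x = δ * max (x - K) 0 + C)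
    (I : ℝ → ℝ) (hI : ∀ x, I x = x ^ (1 / (α - 1)))
    (h : ℝ → ℝ) (hh : ∀ y, h y = (I (y / δ) - C) / δ + K)
    (L : ℝ → ℝ → ℝ) (hL : ∀ y x, L y x = u (g x) - y * x) :
    ∀ y, δ * C ^ (α - 1) ≤ y →
      StrictAntiOn (L y) (Set.Ici 0) ∧
      (∀ x > 0, L y x < u C) ∧
      L y 0 = u C ∧
      (∀ x, 0 ≤ x → (∀ x', 0 ≤ x' → L y x' ≤ L y x) → x = 0) := by
  intro y hy
  obtain ⟨hδ0, hδ1⟩ := hδ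
  have hy0 : 0 < y := lt_of_lt_of_le (by positivity) hy
  -- g values
  have hgC : ∀ x, C ≤ g x := by
    intro x
    rw [hg]
    nlinarith [le_max_right (x - K) 0, hδ0.le]
  have hgpos : ∀ x, 0 < g x := fun x => lt_of_lt_of_le hC (hgC x)
  have hg0 : g 0 = C := by
    rw [hg]
    rw [max_eq_right (by linarith)]
    ring
  have hL0 : L y 0 = u C := by rw [hL, hg0]; ring
  -- L on [0,K] : linear
  have hLle : ∀ x ≤ K, L y x = u C - y * x := by
    intro x hx
    rw [hL, hg, max_eq_right (by linarith)]
    norm_num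
  -- smooth model on [K, ∞)
  set f : ℝ → ℝ := fun x => (δ * (x - K) + C) ^ α / α - y * x with hf
  have hLf : ∀ x, K ≤ x → L y x = f x := by
    intro x hx
    rw [hL, hg, hu, max_eq_left (by linarith)]
  -- strict anti on [K, ∞)
  have hanti2 : StrictAntiOn (L y) (Set.Ici K) := by
    have hcont : ContinuousOn (L y) (Set.Ici K) := by
      have : ContinuousOn f (Set.Ici K) := by
        apply ContinuousOn.sub
        · apply ContinuousOn.div_const
          apply ContinuousOn.rpow_const
          · fun_prop
          · intro x hx
            left
            simp only [Set.mem_Ici] at hx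
            nlinarith
        · fun_prop
      exact this.congr fun x hx => hLf x hx
    apply strictAntiOn_of_deriv_neg (convex_Ici K) hcont
    intro x hx
    rw [interior_Ici] at hx
    simp only [Set.mem_Ioi] at hx
    set t : ℝ := δ * (x - K) + C with ht
    have htC : C < t := by nlinarith
    have ht0 : 0 < t := hC.trans htC
    have hd1 : HasDerivAt (fun z : ℝ => δ * (z - K) + C) δ x := by
      simpa using (((hasDerivAt_id x).sub_const K).const_mul δ).add_const C
    have hd2 : HasDerivAt (fun z : ℝ => (δ * (z - K) + C) ^ α) (α * t ^ (α - 1) * δ) x := by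
      have := (Real.hasDerivAt_rpow_const (p := α) (Or.inl ht0.ne')).comp x hd1
      exact this
    have hd3 : HasDerivAt f (α * t ^ (α - 1) * δ / α - y * 1) x :=
      (hd2.div_const α).sub ((hasDerivAt_id x).const_mul y)
    have heq : deriv (L y) x = α * t ^ (α - 1) * δ / α - y * 1 := by
      have hev : L y =ᶠ[nhds x] f := by
        filter_upwards [Ioi_mem_nhds hx] with z hz
        exact hLf z (le_of_lt hz)
      rw [hev.deriv_eq]
      exact hd3.deriv
    rw [heq]
    have hsimp : α * t ^ (α - 1) * δ / α = t ^ (α - 1) * δ := by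
      field_simp
    rw [hsimp]
    have hpow : t ^ (α - 1) < C ^ (α - 1) :=
      Real.rpow_lt_rpow_of_neg hC htC (by linarith)
    nlinarith [Real.rpow_pos_of_pos hC (α - 1)]
  -- combine
  have hanti : StrictAntiOn (L y) (Set.Ici 0) := by
    intro a ha b hb hab
    simp only [Set.mem_Ici] at ha hb
    rcases le_or_gt b K with hbK | hbK
    · rw [hLle a (le_of_lt (lt_of_lt_of_le hab hbK)), hLle b hbK]
      nlinarith
    · rcases le_or_gt K a with hKa | hKa
      · exact hanti2 hKa (hKa.trans hab.le) hab
      · calc L y b < L y K := hanti2 (le_refl K) (le_of_lt hbK) hbK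
          _ ≤ L y a := by
              rw [hLle a hKa.le, hLle K le_rfl]
              nlinarith
  refine ⟨hanti, ?_, hL0, ?_⟩
  · intro x hx
    have := hanti (le_refl (0:ℝ)) (le_of_lt hx) hx
    rwa [hL0] at this
  · intro x hx hmax
    by_contra hne
    have hx0 : 0 < x := lt_of_le_of_ne hx (Ne.symm hne)
    have h1 := hanti (le_refl (0:ℝ)) hx hx0
    have h2 := hmax 0 le_rfl
    linarith
end

section
/- For every y ∈ (0, δ·C^{α−1}), the function x ↦ ℒ(y,x) = u(g(x)) − y·x is strictly decreasing on [0,K], strictly increasing on [K, h(y)], and strictly decreasing on [h(y), ∞); consequently any maximizer of ℒ(y,·) over [0,∞) is either x = 0 or x = h(y). -/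
open Real Set

/-- for every y ∈ (0, δ·C^{α−1}), x ↦ ℒ(y,x) is strictly
decreasing on [0,K], strictly increasing on [K, h(y)], strictly decreasing on
[h(y),∞); hence any maximizer of ℒ(y,·) on [0,∞) is 0 or h(y). -/
theorem stmt5
    (α δ K C : ℝ) (hα : α < 1) (hα0 : α ≠ 0) (hδ : δ ∈ Set.Ioc (0:ℝ) 1)
    (hK : 0 < K) (hC : 0 < C)
    (u : ℝ → ℝ) (hu : ∀ x, u x = x ^ α / α)
    (g : ℝ → ℝ) (hg : ∀ x, g x = δ * max (x - K) 0 + C)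
    (I : ℝ → ℝ) (hI : ∀ x, I x = x ^ (1 / (α - 1)))
    (h : ℝ → ℝ) (hh : ∀ y, h y = (I (y / δ) - C) / δ + K)
    (L : ℝ → ℝ → ℝ) (hL : ∀ y x, L y x = u (g x) - y * x) :
    ∀ y ∈ Set.Ioo 0 (δ * C ^ (α - 1)),
      StrictAntiOn (L y) (Set.Icc 0 K) ∧
      StrictMonoOn (L y) (Set.Icc K (h y)) ∧
      StrictAntiOn (L y) (Set.Ici (h y)) ∧
      (∀ x, 0 ≤ x → (∀ x', 0 ≤ x' → L y x' ≤ L y x) → x = 0 ∨ x = h y) := by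
  intro y hy
  obtain ⟨hy0, hy1⟩ := hy
  obtain ⟨hδ0, hδ1⟩ := hδ
  have hα1 : α - 1 < 0 := by linarith
  have hα1' : α - 1 ≠ 0 := ne_of_lt hα1
  have hyδ : 0 < y / δ := div_pos hy0 hδ0
  set J : ℝ := (y / δ) ^ (1 / (α - 1)) with hJdef
  have hJpos : 0 < J := rpow_pos_of_pos hyδ _
  have hJpow : J ^ (α - 1) = y / δ := by
    rw [hJdef, ← Real.rpow_mul hyδ.le, one_div, inv_mul_cancel₀ hα1', Real.rpow_one]
  have hJC : C < J := by
    have h1 : y / δ < C ^ (α - 1) := (div_lt_iff₀ hδ0).mpr (by linarith [hy1])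
    have h2 := Real.rpow_lt_rpow_of_neg hyδ h1 (one_div_neg.mpr hα1)
    calc C = (C ^ (α - 1)) ^ (1 / (α - 1)) := by
            rw [← Real.rpow_mul hC.le, mul_one_div, div_self hα1', Real.rpow_one]
      _ < J := h2
  have hhy : h y = (J - C) / δ + K := by rw [hh, hI]
  have hKh : K < h y := by
    rw [hhy]
    have : 0 < (J - C) / δ := div_pos (by linarith) hδ0
    linarith
  -- the smooth extension beyond K
  set f : ℝ → ℝ := fun t => (δ * (t - K) + C) ^ α / α - y * t with hfdef
  have key : ∀ x : ℝ, 0 < δ * (x - K) + C →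
      HasDerivAt f (δ * (δ * (x - K) + C) ^ (α - 1) - y) x := by
    intro x hb
    have h1 : HasDerivAt (fun t : ℝ => δ * (t - K) + C) δ x := by
      simpa using (((hasDerivAt_id x).sub_const K).const_mul δ).add_const C
    have h2 := (h1.rpow_const (p := α) (Or.inl (ne_of_gt hb))).div_const α
    have h4 := (hasDerivAt_id x).const_mul y
    convert h2.sub h4 using 1
    all_goals try rfl
    field_simp
  have hbpos : ∀ x : ℝ, K ≤ x → 0 < δ * (x - K) + C := by
    intro x hx
    nlinarith
  -- f strictly increasing on [K, h y]
  have hf_mono : StrictMonoOn f (Set.Icc K (h y)) := by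
    apply strictMonoOn_of_deriv_pos (convex_Icc _ _)
    · intro x hx
      exact (key x (hbpos x hx.1)).continuousAt.continuousWithinAt
    · intro x hx
      rw [interior_Icc] at hx
      have hb := hbpos x hx.1.le
      rw [(key x hb).deriv]
      have hbJ : δ * (x - K) + C < J := by
        have : x - K < (J - C) / δ := by
          have := hx.2; rw [hhy] at this; linarith
        have h7 : (x - K) * δ < J - C := (lt_div_iff₀ hδ0).mp this
        linarith [h7, mul_comm (x - K) δ]
      have h5 : J ^ (α - 1) < (δ * (x - K) + C) ^ (α - 1) :=
        Real.rpow_lt_rpow_of_neg hb hbJ hα1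
      rw [hJpow] at h5
      have h6 : δ * (y / δ) < δ * (δ * (x - K) + C) ^ (α - 1) :=
        mul_lt_mul_of_pos_left h5 hδ0
      rw [mul_div_cancel₀ y (ne_of_gt hδ0)] at h6
      linarith
  -- f strictly decreasing on [h y, ∞)
  have hf_anti : StrictAntiOn f (Set.Ici (h y)) := by
    apply strictAntiOn_of_deriv_neg (convex_Ici _)
    · intro x hx
      exact (key x (hbpos x (le_trans hKh.le hx))).continuousAt.continuousWithinAt
    · intro x hx
      rw [interior_Ici] at hx
      have hxK : K < x := lt_trans hKh hx
      have hb := hbpos x hxK.le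
      rw [(key x hb).deriv]
      have hbJ : J < δ * (x - K) + C := by
        have hx' : (J - C) / δ < x - K := by
          have h8 := Set.mem_Ioi.mp hx; rw [hhy] at h8; linarith
        have h7 : J - C < (x - K) * δ := (div_lt_iff₀ hδ0).mp hx'
        linarith [h7, mul_comm (x - K) δ]
      have h5 : (δ * (x - K) + C) ^ (α - 1) < J ^ (α - 1) :=
        Real.rpow_lt_rpow_of_neg hJpos hbJ hα1
      rw [hJpow] at h5
      have h6 : δ * (δ * (x - K) + C) ^ (α - 1) < δ * (y / δ) :=
        mul_lt_mul_of_pos_left h5 hδ0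
      rw [mul_div_cancel₀ y (ne_of_gt hδ0)] at h6
      linarith
  -- L agrees with f for x ≥ K
  have hfL : ∀ x : ℝ, K ≤ x → L y x = f x := by
    intro x hx
    rw [hL, hg, hu, max_eq_left (by linarith : (0:ℝ) ≤ x - K)]
  have part1 : StrictAntiOn (L y) (Set.Icc 0 K) := by
    intro a ha b hb hab
    rw [hL, hL, hg, hg, max_eq_right (by linarith [ha.2] : a - K ≤ 0),
      max_eq_right (by linarith [hb.2] : b - K ≤ 0)]
    have := mul_lt_mul_of_pos_left hab hy0
    simp only [mul_zero]
    linarith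
  have part2 : StrictMonoOn (L y) (Set.Icc K (h y)) := by
    intro a ha b hb hab
    rw [hfL a ha.1, hfL b hb.1]
    exact hf_mono ha hb hab
  have part3 : StrictAntiOn (L y) (Set.Ici (h y)) := by
    intro a ha b hb hab
    rw [hfL a (le_trans hKh.le ha), hfL b (le_trans hKh.le hb)]
    exact hf_anti ha hb hab
  refine ⟨part1, part2, part3, ?_⟩
  intro x hx hmax
  by_contra hcon
  push_neg at hcon
  obtain ⟨hx0, hxh⟩ := hcon
  have hx0' : 0 < x := lt_of_le_of_ne hx (Ne.symm hx0)
  rcases lt_trichotomy x (h y) with hlt | heq | hgt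
  · by_cases hxK : x ≤ K
    · have := part1 (Set.mem_Icc.mpr ⟨le_refl 0, hK.le⟩) (Set.mem_Icc.mpr ⟨hx, hxK⟩) hx0'
      linarith [hmax 0 (le_refl 0)]
    · push_neg at hxK
      have := part2 (Set.mem_Icc.mpr ⟨hxK.le, hlt.le⟩)
        (Set.mem_Icc.mpr ⟨hKh.le, le_refl _⟩) hlt
      linarith [hmax (h y) (by linarith : (0:ℝ) ≤ h y)]
  · exact hxh heq
  · have := part3 (Set.mem_Ici.mpr (le_refl _)) (Set.mem_Ici.mpr hgt.le) hgt
    linarith [hmax (h y) (by linarith : (0:ℝ) ≤ h y)]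
end

section
/- For every y ∈ (0, δ·C^{α−1}), the function Δℒ is differentiable at y with derivative Δℒ'(y) = −h(y) < 0; consequently Δℒ is strictly decreasing on (0, δ·C^{α−1}]. -/
open Real Set

/-- for every y ∈ (0, δ·C^{α−1}), Δℒ is differentiable at y with
Δℒ'(y) = −h(y) < 0; consequently Δℒ is strictly decreasing on (0, δ·C^{α−1}]. -/
theorem stmt6
    (α δ K C : ℝ) (hα : α < 1) (hα0 : α ≠ 0) (hδ : δ ∈ Set.Ioc (0:ℝ) 1)
    (hK : 0 < K) (hC : 0 < C)
    (u : ℝ → ℝ) (hu : ∀ x, u x = x ^ α / α)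
    (g : ℝ → ℝ) (hg : ∀ x, g x = δ * max (x - K) 0 + C)
    (I : ℝ → ℝ) (hI : ∀ x, I x = x ^ (1 / (α - 1)))
    (h : ℝ → ℝ) (hh : ∀ y, h y = (I (y / δ) - C) / δ + K)
    (ΔL : ℝ → ℝ) (hΔL : ∀ y, ΔL y = u (g (h y)) - u C - y * h y) :
    (∀ y ∈ Set.Ioo 0 (δ * C ^ (α - 1)), HasDerivAt ΔL (-h y) y ∧ -h y < 0) ∧
      StrictAntiOn ΔL (Set.Ioc 0 (δ * C ^ (α - 1))) := by
  obtain ⟨hδ0, hδ1⟩ := hδ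
  have hα1 : α - 1 < 0 := by linarith
  have hα1' : α - 1 ≠ 0 := ne_of_lt hα1
  set β : ℝ := 1 / (α - 1) with hβ
  have hβneg : β < 0 := div_neg_of_pos_of_neg one_pos hα1
  -- key inequality: C ≤ (y/δ)^β on Ioc
  have hIC : ∀ y ∈ Set.Ioc (0:ℝ) (δ * C ^ (α - 1)), C ≤ (y / δ) ^ β := by
    intro y hy
    have hy0 : 0 < y := hy.1
    have hw : 0 < y / δ := div_pos hy0 hδ0
    have h1 : y / δ ≤ C ^ (α - 1) := by
      rw [div_le_iff₀ hδ0]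
      calc y ≤ δ * C ^ (α - 1) := hy.2
        _ = C ^ (α - 1) * δ := by ring
    have h2 : (C ^ (α - 1)) ^ β ≤ (y / δ) ^ β :=
      Real.rpow_le_rpow_of_nonpos hw h1 hβneg.le
    have h3 : (C ^ (α - 1)) ^ β = C := by
      rw [← Real.rpow_mul hC.le]
      rw [hβ, mul_one_div, div_self hα1', Real.rpow_one]
    linarith [h2, h3.symm.le]
  -- h is positive on Ioc
  have hhpos : ∀ y ∈ Set.Ioc (0:ℝ) (δ * C ^ (α - 1)), K ≤ h y := by
    intro y hy
    rw [hh, hI]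
    have h1 := hIC y hy
    have h2 : 0 ≤ ((y / δ) ^ β - C) / δ := div_nonneg (by linarith) hδ0.le
    linarith
  -- the explicit formula for ΔL on Ioc
  have hEq : ∀ z ∈ Set.Ioc (0:ℝ) (δ * C ^ (α - 1)),
      ΔL z = ((z / δ) ^ β) ^ α / α - C ^ α / α
        - z * (((z / δ) ^ β - C) / δ + K) := by
    intro z hz
    have hIz := hIC z hz
    have hmax : max (h z - K) 0 = ((z / δ) ^ β - C) / δ := by
      rw [hh, hI]
      rw [max_eq_left]
      · ring
      · have : 0 ≤ ((z / δ) ^ β - C) / δ := by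
          apply div_nonneg _ hδ0.le; linarith
        linarith
    have hg' : g (h z) = (z / δ) ^ β := by
      rw [hg, hmax]
      field_simp
      ring
    rw [hΔL, hg', hu, hu, hh, hI]
  -- derivative computation
  have hDer : ∀ y ∈ Set.Ioo (0:ℝ) (δ * C ^ (α - 1)), HasDerivAt ΔL (-h y) y := by
    intro y hy
    have hy0 : 0 < y := hy.1
    have hw : 0 < y / δ := div_pos hy0 hδ0
    have hwβ : 0 < (y / δ) ^ β := Real.rpow_pos_of_pos hw β
    have h0 : HasDerivAt (fun z : ℝ => z / δ) (1 / δ) y := by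
      simpa using (hasDerivAt_id y).div_const δ
    have h1 : HasDerivAt (fun z : ℝ => (z / δ) ^ β) (β * (y / δ) ^ (β - 1) * (1 / δ)) y := by
      exact (Real.hasDerivAt_rpow_const (Or.inl hw.ne')).comp y h0
    have h2 : HasDerivAt (fun z : ℝ => ((z / δ) ^ β) ^ α)
        (α * ((y / δ) ^ β) ^ (α - 1) * (β * (y / δ) ^ (β - 1) * (1 / δ))) y := by
      have := (Real.hasDerivAt_rpow_const (p := α) (Or.inl hwβ.ne')).comp y h1
      exact this
    have hhfun : HasDerivAt (fun z : ℝ => ((z / δ) ^ β - C) / δ + K)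
        (β * (y / δ) ^ (β - 1) * (1 / δ) / δ) y :=
      ((h1.sub_const C).div_const δ).add_const K
    have hprod : HasDerivAt (fun z : ℝ => z * (((z / δ) ^ β - C) / δ + K))
        (1 * (((y / δ) ^ β - C) / δ + K) + y * (β * (y / δ) ^ (β - 1) * (1 / δ) / δ)) y :=
      (hasDerivAt_id y).mul hhfun
    have hF : HasDerivAt (fun z : ℝ => ((z / δ) ^ β) ^ α / α - C ^ α / α
        - z * (((z / δ) ^ β - C) / δ + K))
        (α * ((y / δ) ^ β) ^ (α - 1) * (β * (y / δ) ^ (β - 1) * (1 / δ)) / α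
          - (1 * (((y / δ) ^ β - C) / δ + K) + y * (β * (y / δ) ^ (β - 1) * (1 / δ) / δ))) y :=
      ((h2.div_const α).sub_const (C ^ α / α)).sub hprod
    have e1 : ((y / δ) ^ β) ^ (α - 1) = y / δ := by
      rw [← Real.rpow_mul hw.le, hβ, one_div_mul_cancel hα1', Real.rpow_one]
    have e2 : (y / δ) ^ β = (y / δ) * (y / δ) ^ (β - 1) := by
      have h' := Real.rpow_add hw 1 (β - 1)
      rw [Real.rpow_one] at h'
      rw [← h']
      congr 1
      ring
    have hval : HasDerivAt (fun z : ℝ => ((z / δ) ^ β) ^ α / α - C ^ α / α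
        - z * (((z / δ) ^ β - C) / δ + K)) (-(((y / δ) ^ β - C) / δ + K)) y := by
      convert hF using 1
      rw [e1, e2]
      field_simp
      ring
    have hmem : Set.Ioo (0:ℝ) (δ * C ^ (α - 1)) ∈ nhds y :=
      (isOpen_Ioo).mem_nhds hy
    have heq : ΔL =ᶠ[nhds y] (fun z : ℝ => ((z / δ) ^ β) ^ α / α - C ^ α / α
        - z * (((z / δ) ^ β - C) / δ + K)) := by
      filter_upwards [hmem] with z hz
      exact hEq z (Set.mem_Ioc_of_Ioo hz)
    have : HasDerivAt ΔL (-(((y / δ) ^ β - C) / δ + K)) y :=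
      hval.congr_of_eventuallyEq heq
    have hhy : h y = ((y / δ) ^ β - C) / δ + K := by rw [hh, hI]
    rwa [hhy]
  constructor
  · intro y hy
    refine ⟨hDer y hy, ?_⟩
    have := hhpos y (Set.mem_Ioc_of_Ioo hy)
    linarith
  · apply strictAntiOn_of_deriv_neg (convex_Ioc _ _)
    · -- continuity
      intro y hy
      have hy0 : 0 < y := hy.1
      have hw : 0 < y / δ := div_pos hy0 hδ0
      apply ContinuousAt.continuousWithinAt
      have cdiv : ContinuousAt (fun z : ℝ => z / δ) y := continuousAt_id.div_const δ
      have c1 : ContinuousAt (fun z : ℝ => (z / δ) ^ β) y := by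
        exact ContinuousAt.comp (x := y) (Real.continuousAt_rpow_const (y / δ) β (Or.inl hw.ne')) cdiv
      have ch : ContinuousAt (fun z : ℝ => ((z / δ) ^ β - C) / δ + K) y :=
        ((c1.sub continuousAt_const).div_const δ).add continuousAt_const
      have cm : ContinuousAt (fun z : ℝ => δ * max ((((z / δ) ^ β - C) / δ + K) - K) 0 + C) y :=
        ((continuousAt_const.mul ((ch.sub continuousAt_const).max continuousAt_const)).add
          continuousAt_const)
      have hbase : 0 < δ * max (((( y / δ) ^ β - C) / δ + K) - K) 0 + C := by
        have : (0:ℝ) ≤ δ * max ((((y / δ) ^ β - C) / δ + K) - K) 0 := by positivity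
        linarith
      have cu : ContinuousAt (fun z : ℝ =>
          (δ * max ((((z / δ) ^ β - C) / δ + K) - K) 0 + C) ^ α / α) y := by
        exact (ContinuousAt.comp (x := y) (Real.continuousAt_rpow_const _ α (Or.inl hbase.ne')) cm).div_const α
      have hfun : ΔL = fun z : ℝ =>
          (δ * max ((((z / δ) ^ β - C) / δ + K) - K) 0 + C) ^ α / α - C ^ α / α
            - z * (((z / δ) ^ β - C) / δ + K) := by
        funext z
        rw [hΔL, hu, hu, hg, hh, hI]
      rw [hfun]
      exact (cu.sub continuousAt_const).sub (continuousAt_id.mul ch)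
    · intro y hy
      rw [interior_Ioc] at hy
      rw [(hDer y hy).deriv]
      have := hhpos y (Set.mem_Ioc_of_Ioo hy)
      linarith
end

section
/- If additionally 0 < α < 1, then Δℒ(y) → +∞ as y → 0⁺. -/
open Real Set Filter Topology

/-- if additionally 0 < α < 1, then Δℒ(y) → +∞ as y → 0⁺. -/
theorem stmt8
    (α δ K C : ℝ) (hα : α < 1) (hα0 : α ≠ 0) (hδ : δ ∈ Set.Ioc (0:ℝ) 1)
    (hK : 0 < K) (hC : 0 < C)
    (u : ℝ → ℝ) (hu : ∀ x, u x = x ^ α / α)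
    (g : ℝ → ℝ) (hg : ∀ x, g x = δ * max (x - K) 0 + C)
    (I : ℝ → ℝ) (hI : ∀ x, I x = x ^ (1 / (α - 1)))
    (h : ℝ → ℝ) (hh : ∀ y, h y = (I (y / δ) - C) / δ + K)
    (ΔL : ℝ → ℝ) (hΔL : ∀ y, ΔL y = u (g (h y)) - u C - y * h y)
    (hαpos : 0 < α) :
    Tendsto ΔL (nhdsWithin 0 (Set.Ioi 0)) atTop := by
  obtain ⟨hδ0, hδ1⟩ := hδ
  have hα1 : α - 1 < 0 := by linarith
  have hα1' : α - 1 ≠ 0 := ne_of_lt hα1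
  set r : ℝ := 1 / (α - 1) with hrdef
  set p : ℝ := α / (α - 1) with hpdef
  have hr : r < 0 := div_neg_of_pos_of_neg one_pos hα1
  have hp : p < 0 := div_neg_of_pos_of_neg hαpos hα1
  have hrp : 1 + r = p := by
    rw [hrdef, hpdef, one_add_div hα1']; ring
  have hrap : r * α = p := by
    rw [hrdef, hpdef]; field_simp
  -- key: for negative exponent e, (y/δ)^e → ∞ as y → 0+
  have key : ∀ e : ℝ, e < 0 →
      Tendsto (fun y : ℝ => (y / δ) ^ e) (𝓝[>] (0:ℝ)) atTop := by
    intro e he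
    have h1 : Tendsto (fun y : ℝ => y / δ) (𝓝[>] (0:ℝ)) (𝓝[>] (0:ℝ)) := by
      apply tendsto_nhdsWithin_of_tendsto_nhds_of_eventually_within
      · simpa using ((continuous_id.div_const δ).tendsto' 0 0 (by simp)).mono_left
          nhdsWithin_le_nhds
      · filter_upwards [self_mem_nhdsWithin] with y hy
        exact div_pos hy hδ0
    have h2 : Tendsto (fun t : ℝ => t ^ (-e)) (𝓝[>] (0:ℝ)) (𝓝[>] (0:ℝ)) := by
      apply tendsto_nhdsWithin_of_tendsto_nhds_of_eventually_within
      · have hc : ContinuousAt (fun t : ℝ => t ^ (-e)) 0 :=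
          Real.continuousAt_rpow_const 0 (-e) (Or.inr (by linarith))
        have h0 : (0:ℝ) ^ (-e) = 0 := Real.zero_rpow (by intro hc; linarith [neg_eq_zero.mp hc])
        simpa [h0] using hc.tendsto.mono_left nhdsWithin_le_nhds
      · filter_upwards [self_mem_nhdsWithin] with t ht
        exact Real.rpow_pos_of_pos ht _
    have h3 : Tendsto (fun y : ℝ => ((y / δ) ^ (-e))⁻¹) (𝓝[>] (0:ℝ)) atTop :=
      tendsto_inv_nhdsGT_zero.comp (h2.comp h1)
    refine h3.congr' ?_
    filter_upwards [self_mem_nhdsWithin] with y hy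
    have hyδ : (0:ℝ) < y / δ := div_pos hy hδ0
    rw [← Real.rpow_neg hyδ.le, neg_neg]
  have hCge : ∀ᶠ y in 𝓝[>] (0:ℝ), C ≤ (y / δ) ^ r :=
    (key r hr).eventually_ge_atTop C
  have heq : ΔL =ᶠ[𝓝[>] (0:ℝ)]
      fun y => (1 / α - 1) * (y / δ) ^ p + (-(C ^ α / α) + y * C / δ - y * K) := by
    filter_upwards [hCge, self_mem_nhdsWithin] with y hy hy0
    have hyδ : (0:ℝ) < y / δ := div_pos hy0 hδ0
    set t : ℝ := (y / δ) ^ r with htdef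
    have htC : 0 ≤ t - C := sub_nonneg.2 hy
    have hmax : max ((t - C) / δ + K - K) 0 = (t - C) / δ := by
      rw [add_sub_cancel_right, max_eq_left (div_nonneg htC hδ0.le)]
    have hgh : g (h y) = t := by
      rw [hh, hI, hg, ← htdef, hmax]
      field_simp
      ring
    have hs1 : t ^ α = (y / δ) ^ p := by
      rw [htdef, ← Real.rpow_mul hyδ.le, hrap]
    have hs2 : (y / δ) * t = (y / δ) ^ p := by
      rw [htdef, ← hrp, Real.rpow_add hyδ, Real.rpow_one]
    have hhy : h y = (t - C) / δ + K := by rw [hh, hI, ← htdef]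
    rw [hΔL, hgh, hhy, hu, hu, hs1]
    set s : ℝ := (y / δ) ^ p with hsdef
    have hyt : y * t = δ * s := by
      rw [← hs2]; field_simp
    have h' : y * ((t - C) / δ + K) = s - y * C / δ + y * K := by
      field_simp
      linear_combination hyt
    linear_combination -h'
  have hadd : Tendsto
      (fun y : ℝ => (1 / α - 1) * (y / δ) ^ p + (-(C ^ α / α) + y * C / δ - y * K))
      (𝓝[>] (0:ℝ)) atTop := by
    apply tendsto_atTop_add_right_of_le' _ (-(C ^ α / α) - 1)
    · refine (key p hp).const_mul_atTop ?_
      have : 1 < 1 / α := (one_lt_div hαpos).2 hα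
      linarith
    · have hcont : Tendsto (fun y : ℝ => -(C ^ α / α) + y * C / δ - y * K)
          (𝓝[>] (0:ℝ)) (𝓝 (-(C ^ α / α))) := by
        have hca : ContinuousAt (fun y : ℝ => -(C ^ α / α) + y * C / δ - y * K) 0 := by
          fun_prop
        have h0 := hca.tendsto.mono_left (nhdsWithin_le_nhds (s := Set.Ioi (0:ℝ)))
        simpa using h0
      filter_upwards [hcont.eventually (eventually_ge_nhds (by linarith : -(C ^ α / α) - 1 < -(C ^ α / α)))] with y hy using hy
  exact hadd.congr' heq.symm
end

section
/- There exists a unique ŷ ∈ (0, δ·C^{α−1}) with Δℒ(ŷ) = 0; moreover Δℒ(y) > 0 for all y ∈ (0, ŷ) and Δℒ(y) < 0 for all y ∈ (ŷ, δ·C^{α−1}]. -/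
open Real Set Filter

/-- there exists a unique ŷ ∈ (0, δ·C^{α−1}) with Δℒ(ŷ) = 0;
moreover Δℒ > 0 on (0, ŷ) and Δℒ < 0 on (ŷ, δ·C^{α−1}]. -/
theorem stmt10
    (α δ K C : ℝ) (hα : α < 1) (hα0 : α ≠ 0) (hδ : δ ∈ Set.Ioc (0:ℝ) 1)
    (hK : 0 < K) (hC : 0 < C)
    (u : ℝ → ℝ) (hu : ∀ x, u x = x ^ α / α)
    (g : ℝ → ℝ) (hg : ∀ x, g x = δ * max (x - K) 0 + C)
    (I : ℝ → ℝ) (hI : ∀ x, I x = x ^ (1 / (α - 1)))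
    (h : ℝ → ℝ) (hh : ∀ y, h y = (I (y / δ) - C) / δ + K)
    (ΔL : ℝ → ℝ) (hΔL : ∀ y, ΔL y = u (g (h y)) - u C - y * h y) :
    ∃ yhat ∈ Set.Ioo 0 (δ * C ^ (α - 1)),
      ΔL yhat = 0 ∧
      (∀ y ∈ Set.Ioo 0 (δ * C ^ (α - 1)), ΔL y = 0 → y = yhat) ∧
      (∀ y ∈ Set.Ioo 0 yhat, 0 < ΔL y) ∧
      (∀ y ∈ Set.Ioc yhat (δ * C ^ (α - 1)), ΔL y < 0) := by
  obtain ⟨hδ0, hδ1⟩ := hδ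
  have hα1 : α - 1 < 0 := by linarith
  have hα1' : α - 1 ≠ 0 := ne_of_lt hα1
  set yb := δ * C ^ (α - 1) with hybdef
  have hCp : (0:ℝ) < C ^ (α - 1) := Real.rpow_pos_of_pos hC _
  have hyb0 : 0 < yb := mul_pos hδ0 hCp
  set G : ℝ → ℝ := fun t => (1/α - 1) * t ^ α + (C - δ*K) * t ^ (α-1) - C ^ α / α
    with hGdef
  set T : ℝ → ℝ := fun y => (y/δ) ^ (1/(α-1)) with hTdef
  -- T maps Ioc 0 yb into Ici C
  have hTC : ∀ y ∈ Set.Ioc 0 yb, C ≤ T y := by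
    intro y hy
    have hyd : y / δ ≤ C ^ (α - 1) := (div_le_iff₀ hδ0).mpr (by
      rw [mul_comm]; exact hy.2)
    have hyd0 : 0 < y / δ := div_pos hy.1 hδ0
    have h1 : (C ^ (α-1)) ^ (1/(α-1)) ≤ (y/δ) ^ (1/(α-1)) :=
      Real.rpow_le_rpow_of_nonpos hyd0 hyd (by
        apply le_of_lt
        exact div_neg_of_pos_of_neg one_pos hα1)
    have h2 : (C ^ (α-1)) ^ (1/(α-1)) = C := by
      rw [← Real.rpow_mul hC.le, mul_one_div_cancel hα1', Real.rpow_one]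
    rw [h2] at h1
    exact h1
  have hT0 : ∀ y ∈ Set.Ioc 0 yb, 0 < T y := fun y hy =>
    Real.rpow_pos_of_pos (div_pos hy.1 hδ0) _
  -- key representation
  have hrep : ∀ y ∈ Set.Ioc 0 yb, ΔL y = G (T y) := by
    intro y hy
    set t := T y with htdef
    have ht0 : 0 < t := hT0 y hy
    have htC : C ≤ t := hTC y hy
    have htpow : t ^ (α - 1) = y / δ := by
      rw [htdef, hTdef]
      rw [← Real.rpow_mul (div_pos hy.1 hδ0).le, one_div_mul_cancel hα1',
        Real.rpow_one]
    have hy_eq : y = δ * t ^ (α - 1) := by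
      rw [htpow]; field_simp
    have hhy : h y = (t - C)/δ + K := by
      rw [hh, hI, htdef, hTdef]
    have hmax : max (h y - K) 0 = (t - C)/δ := by
      rw [hhy]
      simp only [add_sub_cancel_right]
      exact max_eq_left (div_nonneg (by linarith) hδ0.le)
    have hgh : g (h y) = t := by
      rw [hg, hmax, mul_div_cancel₀ _ (ne_of_gt hδ0)]
      ring
    have htα : t ^ α = t ^ (α - 1) * t := by
      rw [← Real.rpow_add_one (ne_of_gt ht0) (α - 1)]
      ring_nf
    rw [hΔL, hu, hu, hgh, hhy, hGdef]
    simp only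
    rw [hy_eq, htα]
    have hB : (0:ℝ) < t ^ (α - 1) := Real.rpow_pos_of_pos ht0 _
    field_simp
    ring
  -- G is strictly monotone on Ici C
  have hGderiv : ∀ t ∈ Set.Ioi C, HasDerivAt G
      ((1/α - 1) * (α * t ^ (α-1)) + (C - δ*K) * ((α-1) * t ^ (α-1-1))) t := by
    intro t ht
    have ht0 : t ≠ 0 := ne_of_gt (hC.trans ht)
    exact (((Real.hasDerivAt_rpow_const (Or.inl ht0)).const_mul (1/α - 1)).add
      ((Real.hasDerivAt_rpow_const (p := α - 1) (Or.inl ht0)).const_mul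
        (C - δ*K))).sub_const _
  have hGcont : ContinuousOn G (Set.Ici C) := by
    have hne : ∀ x ∈ Set.Ici C, x ≠ 0 ∨ (0:ℝ) ≤ α :=
      fun x hx => Or.inl (ne_of_gt (lt_of_lt_of_le hC hx))
    have hne' : ∀ x ∈ Set.Ici C, x ≠ 0 ∨ (0:ℝ) ≤ α - 1 :=
      fun x hx => Or.inl (ne_of_gt (lt_of_lt_of_le hC hx))
    exact (((continuousOn_id.rpow_const hne).const_smul (1/α - 1)).add
      ((continuousOn_id.rpow_const hne').const_smul (C - δ*K))).sub
      continuousOn_const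
  have hGmono : StrictMonoOn G (Set.Ici C) := by
    apply strictMonoOn_of_deriv_pos (convex_Ici C) hGcont
    intro t ht
    rw [interior_Ici] at ht
    have ht0 : 0 < t := hC.trans ht
    rw [(hGderiv t ht).deriv]
    have h1 : (1/α - 1) * α = 1 - α := by field_simp
    have h2 : t ^ (α - 1) = t ^ (α - 1 - 1) * t := by
      rw [← Real.rpow_add_one (ne_of_gt ht0) (α - 1 - 1)]
      ring_nf
    have key : (1/α - 1) * (α * t ^ (α-1)) + (C - δ*K) * ((α-1) * t ^ (α-1-1))
        = t ^ (α-1-1) * ((1 - α) * (t - (C - δ*K))) := by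
      rw [h2]
      linear_combination (t ^ (α-1-1) * t) * h1
    rw [key]
    have htC : C < t := ht
    have h4 : 0 < t - (C - δ*K) := by nlinarith [mul_pos hδ0 hK]
    have h5 : (0:ℝ) < t ^ (α-1-1) := Real.rpow_pos_of_pos ht0 _
    exact mul_pos h5 (mul_pos (by linarith) h4)
  -- value at C
  have hGC : G C = -(δ * K * C ^ (α - 1)) := by
    rw [hGdef]
    simp only
    have hCα : C ^ α = C ^ (α - 1) * C := by
      rw [← Real.rpow_add_one (ne_of_gt hC) (α - 1)]
      ring_nf
    rw [hCα]
    field_simp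
    ring
  have hGCneg : G C < 0 := by
    rw [hGC]
    have : 0 < δ * K * C ^ (α - 1) := by positivity
    linarith
  -- eventual positivity of G at infinity
  have hev : ∀ᶠ t in Filter.atTop, 0 < G t := by
    have l2 : Tendsto (fun t : ℝ => t ^ (α - 1)) atTop (nhds 0) := by
      have := tendsto_rpow_neg_atTop (show (0:ℝ) < 1 - α by linarith)
      simpa [neg_sub] using this
    rcases hα0.lt_or_gt with hneg | hpos
    · -- α < 0
      have l1 : Tendsto (fun t : ℝ => t ^ α) atTop (nhds 0) := by
        have := tendsto_rpow_neg_atTop (show (0:ℝ) < -α by linarith)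
        simpa using this
      have hlim : Tendsto G atTop
          (nhds ((1/α - 1) * 0 + (C - δ*K) * 0 - C ^ α / α)) := by
        exact ((l1.const_mul _).add (l2.const_mul _)).sub tendsto_const_nhds
      have hpos' : 0 < (1/α - 1) * 0 + (C - δ*K) * 0 - C ^ α / α := by
        have h1 : (0:ℝ) < C ^ α := Real.rpow_pos_of_pos hC _
        have h2 : C ^ α / α < 0 := div_neg_of_pos_of_neg h1 hneg
        linarith
      exact hlim.eventually (eventually_gt_nhds hpos')
    · -- 0 < α < 1
      have hcoef : 0 < 1/α - 1 := by
        have := one_lt_one_div hpos hα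
        linarith
      have l1 : Tendsto (fun t : ℝ => (1/α - 1) * t ^ α) atTop atTop :=
        (tendsto_rpow_atTop hpos).const_mul_atTop hcoef
      have l3 : Tendsto (fun t : ℝ => (C - δ*K) * t ^ (α-1) - C ^ α / α) atTop
          (nhds ((C - δ*K) * 0 - C ^ α / α)) :=
        (l2.const_mul _).sub tendsto_const_nhds
      have hlim0 := l1.atTop_add l3
      have hlim : Tendsto G atTop atTop := by
        apply hlim0.congr
        intro t
        simp only [hGdef]
        ring
      exact hlim.eventually_gt_atTop 0
  obtain ⟨t0, ht0pos, ht0ge⟩ := (hev.and (eventually_ge_atTop C)).exists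
  -- t0 > C because G C < 0 < G t0
  have ht0C : C < t0 := by
    rcases lt_or_eq_of_le ht0ge with h' | h'
    · exact h'
    · exfalso; rw [← h'] at ht0pos; linarith
  -- IVT for G on [C, t0]
  have hivt : ∃ that ∈ Set.Ioo C t0, G that = 0 := by
    have hsub : Set.Icc C t0 ⊆ Set.Ici C := Set.Icc_subset_Ici_self
    have h0mem : (0:ℝ) ∈ Set.Ioo (G C) (G t0) := ⟨hGCneg, ht0pos⟩
    have := intermediate_value_Ioo (le_of_lt ht0C) (hGcont.mono hsub)
    obtain ⟨that, hmem, heq⟩ := this h0mem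
    exact ⟨that, hmem, heq⟩
  obtain ⟨that, ⟨hthatC, hthat0⟩, hGzero⟩ := hivt
  have hthatp : 0 < that := hC.trans hthatC
  -- define yhat
  set yhat := δ * that ^ (α - 1) with hyhatdef
  have hyhatpos : 0 < yhat := by
    have := Real.rpow_pos_of_pos hthatp (α - 1)
    positivity
  have hyhatlt : yhat < yb := by
    have := Real.rpow_lt_rpow_of_neg hC hthatC hα1
    exact mul_lt_mul_of_pos_left this hδ0
  have hyhatmem : yhat ∈ Set.Ioc 0 yb := ⟨hyhatpos, le_of_lt hyhatlt⟩
  have hTyhat : T yhat = that := by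
    have hq : yhat / δ = that ^ (α - 1) := by
      rw [hyhatdef]
      field_simp
    rw [hTdef]
    simp only
    rw [hq, ← Real.rpow_mul hthatp.le, mul_one_div_cancel hα1', Real.rpow_one]
  have hΔLyhat : ΔL yhat = 0 := by
    rw [hrep yhat hyhatmem, hTyhat, hGzero]
  -- ΔL is strictly antitone on Ioc 0 yb
  have hanti : StrictAntiOn ΔL (Set.Ioc 0 yb) := by
    intro y1 h1 y2 h2 hlt
    rw [hrep y1 h1, hrep y2 h2]
    have hTlt : T y2 < T y1 := by
      rw [hTdef]
      exact Real.rpow_lt_rpow_of_neg (div_pos h1.1 hδ0)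
        (div_lt_div_of_pos_right hlt hδ0)
        (div_neg_of_pos_of_neg one_pos hα1)
    exact hGmono (hTC y2 h2) (hTC y1 h1) hTlt
  refine ⟨yhat, ⟨hyhatpos, hyhatlt⟩, hΔLyhat, ?_, ?_, ?_⟩
  · intro y hy hΔLy
    exact hanti.injOn ⟨hy.1, le_of_lt hy.2⟩ hyhatmem (by rw [hΔLy, hΔLyhat])
  · intro y hy
    have hymem : y ∈ Set.Ioc 0 yb := ⟨hy.1, le_of_lt (hy.2.trans hyhatlt)⟩
    have := hanti hymem hyhatmem hy.2
    rw [hΔLyhat] at this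
    exact this
  · intro y hy
    have hymem : y ∈ Set.Ioc 0 yb := ⟨hyhatpos.trans hy.1, hy.2⟩
    have := hanti hyhatmem hymem hy.1
    rw [hΔLyhat] at this
    exact this
end

section
/- For every measurable density ρ : Ω → (0,∞) with ∫ ρ dP = 1, one has (∫ f^λ dP)^{1/λ} ≤ (∫ f·ρ dP)·(∫ ρ^{λ/(λ−1)} dP)^{(1−λ)/λ}, where the right-hand side is interpreted as +∞ if either integral is infinite; equality holds for the density ρ* = f^{λ−1} / ∫ f^{λ−1} dP. Consequently (∫ f^λ dP)^{1/λ} equals the infimum of the right-hand side over all such densities ρ. -/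
open Real Set MeasureTheory
open scoped ENNReal

/-- reverse-Hölder robust representation of the power aggregator.
For every positive density ρ with ∫ ρ dP = 1,
(∫ f^λ dP)^{1/λ} ≤ (∫ f·ρ dP)·(∫ ρ^{λ/(λ−1)} dP)^{(1−λ)/λ} (in ℝ≥0∞, so the
right-hand side is +∞ when an integral is infinite); equality holds for
ρ* = f^{λ−1}/∫ f^{λ−1} dP, hence the left-hand side is the least element of
the set of right-hand values. -/
theorem stmt13 {Ω : Type*} [MeasurableSpace Ω]
    (P : Measure Ω) [IsProbabilityMeasure P]
    (l : ℝ) (hl : l ∈ Set.Ioo (0 : ℝ) 1)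
    (f : Ω → ℝ) (hf : Measurable f) (hfpos : ∀ ω, 0 < f ω)
    (hfl : Integrable (fun ω => f ω ^ l) P)
    (hfl1 : Integrable (fun ω => f ω ^ (l - 1)) P) :
    IsLeast {v : ℝ≥0∞ | ∃ ρ : Ω → ℝ, Measurable ρ ∧ (∀ ω, 0 < ρ ω) ∧
          (∫⁻ ω, ENNReal.ofReal (ρ ω) ∂P) = 1 ∧
          v = (∫⁻ ω, ENNReal.ofReal (f ω * ρ ω) ∂P) *
              (∫⁻ ω, ENNReal.ofReal (ρ ω ^ (l / (l - 1))) ∂P) ^ ((1 - l) / l)}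
        ((∫⁻ ω, ENNReal.ofReal (f ω ^ l) ∂P) ^ (1 / l)) ∧
      ((∫⁻ ω, ENNReal.ofReal (f ω ^ l) ∂P) ^ (1 / l) =
        (∫⁻ ω, ENNReal.ofReal
            (f ω * (f ω ^ (l - 1) / ∫ x, f x ^ (l - 1) ∂P)) ∂P) *
          (∫⁻ ω, ENNReal.ofReal
              ((f ω ^ (l - 1) / ∫ x, f x ^ (l - 1) ∂P) ^ (l / (l - 1))) ∂P)
            ^ ((1 - l) / l)) := by
  obtain ⟨hl0, hl1⟩ := hl
  have hlne : l ≠ 0 := ne_of_gt hl0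
  have hl1ne : l - 1 ≠ 0 := by linarith
  set c : ℝ := ∫ x, f x ^ (l - 1) ∂P with hc_def
  have hc : 0 < c := by
    rw [hc_def, integral_pos_iff_support_of_nonneg
      (fun ω => (Real.rpow_pos_of_pos (hfpos ω) _).le) hfl1]
    have hs : (Function.support fun ω => f ω ^ (l - 1)) = Set.univ := by
      ext ω; simp [Function.support, (Real.rpow_pos_of_pos (hfpos ω) (l - 1)).ne']
    simp [hs]
  set A : ℝ≥0∞ := ∫⁻ ω, ENNReal.ofReal (f ω ^ l) ∂P with hA_def
  have hA : A = ENNReal.ofReal (∫ ω, f ω ^ l ∂P) :=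
    (ofReal_integral_eq_lintegral_ofReal hfl
      (ae_of_all _ fun ω => (Real.rpow_pos_of_pos (hfpos ω) l).le)).symm
  have hIfl : 0 < ∫ ω, f ω ^ l ∂P := by
    rw [integral_pos_iff_support_of_nonneg
      (fun ω => (Real.rpow_pos_of_pos (hfpos ω) _).le) hfl]
    have hs : (Function.support fun ω => f ω ^ l) = Set.univ := by
      ext ω; simp [Function.support, (Real.rpow_pos_of_pos (hfpos ω) l).ne']
    simp [hs]
  have hA0 : A ≠ 0 := by rw [hA]; exact (ENNReal.ofReal_pos.2 hIfl).ne'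
  have hAtop : A ≠ ⊤ := by rw [hA]; exact ENNReal.ofReal_ne_top
  -- key inequality for an arbitrary positive ρ
  have key : ∀ ρ : Ω → ℝ, Measurable ρ → (∀ ω, 0 < ρ ω) →
      A ^ (1 / l) ≤ (∫⁻ ω, ENNReal.ofReal (f ω * ρ ω) ∂P) *
        (∫⁻ ω, ENNReal.ofReal (ρ ω ^ (l / (l - 1))) ∂P) ^ ((1 - l) / l) := by
    intro ρ hρ hρpos
    set F : Ω → ℝ≥0∞ := fun ω => ENNReal.ofReal (f ω) with hF
    set R : Ω → ℝ≥0∞ := fun ω => ENNReal.ofReal (ρ ω) with hR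
    have hpq : Real.HolderConjugate (1 / l) (1 / (1 - l)) := by
      rw [Real.holderConjugate_iff]; constructor
      · rw [lt_div_iff₀ hl0]; linarith
      · rw [one_div, one_div, inv_inv, inv_inv]; ring
    have hmF : Measurable fun ω => (F ω * R ω) ^ l :=
      (hf.ennreal_ofReal.mul hρ.ennreal_ofReal).pow_const l
    have hmG : Measurable fun ω => (R ω) ^ (-l) := hρ.ennreal_ofReal.pow_const (-l)
    have H := ENNReal.lintegral_mul_le_Lp_mul_Lq P hpq hmF.aemeasurable hmG.aemeasurable
    have e1 : ∀ ω, ((fun ω => (F ω * R ω) ^ l) * fun ω => (R ω) ^ (-l)) ω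
        = ENNReal.ofReal (f ω ^ l) := by
      intro ω
      have hR0 : R ω ≠ 0 := (ENNReal.ofReal_pos.2 (hρpos ω)).ne'
      have hRtop : R ω ≠ ⊤ := ENNReal.ofReal_ne_top
      simp only [Pi.mul_apply]
      rw [ENNReal.mul_rpow_of_nonneg _ _ hl0.le, mul_assoc,
        ← ENNReal.rpow_add l (-l) hR0 hRtop]
      simp [hF, ENNReal.ofReal_rpow_of_pos (hfpos ω)]
    have e2 : ∀ ω, ((F ω * R ω) ^ l) ^ (1 / l) = ENNReal.ofReal (f ω * ρ ω) := by
      intro ω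
      rw [← ENNReal.rpow_mul, mul_one_div_cancel hlne, ENNReal.rpow_one, hF, hR,
        ← ENNReal.ofReal_mul (hfpos ω).le]
    have e3 : ∀ ω, ((R ω) ^ (-l)) ^ (1 / (1 - l)) = ENNReal.ofReal (ρ ω ^ (l / (l - 1))) := by
      intro ω
      rw [← ENNReal.rpow_mul, show -l * (1 / (1 - l)) = l / (l - 1) by
        field_simp; ring, hR, ENNReal.ofReal_rpow_of_pos (hρpos ω)]
    rw [lintegral_congr e1] at H
    simp only [e2, e3, one_div_one_div] at H
    have H2 := ENNReal.rpow_le_rpow H (one_div_nonneg.2 hl0.le)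
    rwa [ENNReal.mul_rpow_of_nonneg _ _ (one_div_nonneg.2 hl0.le), ← ENNReal.rpow_mul,
      ← ENNReal.rpow_mul, mul_one_div_cancel hlne, ENNReal.rpow_one, mul_one_div] at H2
  -- computations for the optimal density
  set D : ℝ≥0∞ := ENNReal.ofReal c with hD
  have hD0 : D ≠ 0 := (ENNReal.ofReal_pos.2 hc).ne'
  have hDtop : D ≠ ⊤ := ENNReal.ofReal_ne_top
  have hmfl : Measurable fun ω => ENNReal.ofReal (f ω ^ l) := (hf.pow_const l).ennreal_ofReal
  have h2 : (∫⁻ ω, ENNReal.ofReal (f ω * (f ω ^ (l - 1) / c)) ∂P) = A * D⁻¹ := by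
    have e : ∀ ω, ENNReal.ofReal (f ω * (f ω ^ (l - 1) / c))
        = ENNReal.ofReal (f ω ^ l) * D⁻¹ := by
      intro ω
      have h' : f ω * (f ω ^ (l - 1) / c) = f ω ^ l * c⁻¹ := by
        rw [show l = 1 + (l - 1) by ring, Real.rpow_add (hfpos ω), Real.rpow_one]; ring
      rw [h', ENNReal.ofReal_mul (Real.rpow_pos_of_pos (hfpos ω) l).le,
        ENNReal.ofReal_inv_of_pos hc]
    simp only [e]
    rw [lintegral_mul_const _ hmfl]
  have h3 : (∫⁻ ω, ENNReal.ofReal ((f ω ^ (l - 1) / c) ^ (l / (l - 1))) ∂P)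
      = A * (ENNReal.ofReal (c ^ (l / (l - 1))))⁻¹ := by
    have e : ∀ ω, ENNReal.ofReal ((f ω ^ (l - 1) / c) ^ (l / (l - 1)))
        = ENNReal.ofReal (f ω ^ l) * (ENNReal.ofReal (c ^ (l / (l - 1))))⁻¹ := by
      intro ω
      rw [Real.div_rpow (Real.rpow_nonneg (hfpos ω).le _) hc.le,
        ← Real.rpow_mul (hfpos ω).le, show (l - 1) * (l / (l - 1)) = l by field_simp,
        ENNReal.ofReal_div_of_pos (Real.rpow_pos_of_pos hc _), div_eq_mul_inv]
    simp only [e]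
    rw [lintegral_mul_const _ hmfl]
  have hDs : ((ENNReal.ofReal (c ^ (l / (l - 1))))⁻¹) ^ ((1 - l) / l) = D := by
    rw [ENNReal.inv_rpow, ENNReal.ofReal_rpow_of_pos (Real.rpow_pos_of_pos hc _),
      ← Real.rpow_mul hc.le, show l / (l - 1) * ((1 - l) / l) = -1 by field_simp; ring,
      Real.rpow_neg_one, ENNReal.ofReal_inv_of_pos hc, inv_inv]
  have heq : A ^ (1 / l) =
      (∫⁻ ω, ENNReal.ofReal (f ω * (f ω ^ (l - 1) / c)) ∂P) *
        (∫⁻ ω, ENNReal.ofReal ((f ω ^ (l - 1) / c) ^ (l / (l - 1))) ∂P) ^ ((1 - l) / l) := by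
    rw [h2, h3, ENNReal.mul_rpow_of_nonneg _ _ (div_nonneg (by linarith) hl0.le), hDs]
    calc A ^ (1 / l) = A ^ (1 + (1 - l) / l) := by
          rw [show (1 : ℝ) + (1 - l) / l = 1 / l by field_simp; ring]
      _ = A ^ (1 : ℝ) * A ^ ((1 - l) / l) := ENNReal.rpow_add 1 _ hA0 hAtop
      _ = A * D⁻¹ * (A ^ ((1 - l) / l) * D) := by
          rw [ENNReal.rpow_one,
            show A * D⁻¹ * (A ^ ((1 - l) / l) * D) = A * A ^ ((1 - l) / l) * (D⁻¹ * D) by ring,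
            ENNReal.inv_mul_cancel hD0 hDtop, mul_one]
  -- the optimal density is a density
  have hint : Integrable (fun ω => f ω ^ (l - 1) / c) P := hfl1.div_const c
  have hnorm : (∫⁻ ω, ENNReal.ofReal (f ω ^ (l - 1) / c) ∂P) = 1 := by
    rw [← ofReal_integral_eq_lintegral_ofReal hint
      (ae_of_all _ fun ω => div_nonneg (Real.rpow_pos_of_pos (hfpos ω) _).le hc.le)]
    rw [integral_div, ← hc_def, div_self hc.ne']
    simp
  refine ⟨⟨⟨fun ω => f ω ^ (l - 1) / c, (hf.pow_const (l - 1)).div_const c,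
    fun ω => div_pos (Real.rpow_pos_of_pos (hfpos ω) _) hc, hnorm, heq⟩, ?_⟩, heq⟩
  rintro v ⟨ρ, hρm, hρp, -, rfl⟩
  exact key ρ hρm hρp
end

section
/- For every measurable density ρ : Ω → (0,∞) with ∫ ρ dP = 1 and log ρ ∈ L¹(P), one has ∫ f·ρ dP ≥ exp(∫ log f dP + ∫ log ρ dP) (allowing the left-hand side to be +∞); equivalently exp(∫ log f dP) ≤ (∫ f·ρ dP)·exp(−∫ log ρ dP). Equality holds for the density ρ* = f^{−1} / ∫ f^{−1} dP, so exp(∫ log f dP) equals the infimum of (∫ f·ρ dP)·exp(−∫ log ρ dP) over all such ρ. -/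
open Real Set MeasureTheory
open scoped ENNReal

lemma jensen_exp_log {Ω : Type*} [MeasurableSpace Ω]
    (P : Measure Ω) [IsProbabilityMeasure P]
    (g : Ω → ℝ) (hg : Measurable g) (hgpos : ∀ ω, 0 < g ω)
    (hlog : Integrable (fun ω => Real.log (g ω)) P) :
    ENNReal.ofReal (Real.exp (∫ ω, Real.log (g ω) ∂P)) ≤
      ∫⁻ ω, ENNReal.ofReal (g ω) ∂P := by
  by_cases htop : (∫⁻ ω, ENNReal.ofReal (g ω) ∂P) = ∞
  · simp [htop]
  have hgi : Integrable g P := by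
    refine ⟨hg.aestronglyMeasurable, ?_⟩
    rw [hasFiniteIntegral_iff_norm]
    have : (∫⁻ ω, ENNReal.ofReal ‖g ω‖ ∂P) = ∫⁻ ω, ENNReal.ofReal (g ω) ∂P := by
      refine lintegral_congr fun ω => ?_
      rw [Real.norm_of_nonneg (hgpos ω).le]
    rw [this]; exact lt_top_iff_ne_top.2 htop
  have hjen : Real.exp (∫ ω, Real.log (g ω) ∂P) ≤ ∫ ω, Real.exp (Real.log (g ω)) ∂P := by
    have := (convexOn_exp).map_integral_le (μ := P) (f := fun ω => Real.log (g ω))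
      continuous_exp.continuousOn isClosed_univ
      (Filter.Eventually.of_forall fun _ => trivial) hlog ?_
    · exact this
    · refine hgi.congr ?_
      exact Filter.Eventually.of_forall fun ω => by
        simp [Function.comp, Real.exp_log (hgpos ω)]
  have heq : (∫ ω, Real.exp (Real.log (g ω)) ∂P) = ∫ ω, g ω ∂P :=
    integral_congr_ae (Filter.Eventually.of_forall fun ω => Real.exp_log (hgpos ω))
  rw [heq] at hjen
  calc ENNReal.ofReal (Real.exp (∫ ω, Real.log (g ω) ∂P))
      ≤ ENNReal.ofReal (∫ ω, g ω ∂P) := ENNReal.ofReal_le_ofReal hjen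
    _ = ∫⁻ ω, ENNReal.ofReal (g ω) ∂P :=
        ofReal_integral_eq_lintegral_ofReal hgi
          (Filter.Eventually.of_forall fun ω => (hgpos ω).le)

/-- robust representation of the logarithmic aggregator. For
every positive density ρ with ∫ ρ dP = 1 and log ρ ∈ L¹(P),
∫ f·ρ dP ≥ exp(∫ log f dP + ∫ log ρ dP) (in ℝ≥0∞, so the left side may be +∞);
equivalently exp(∫ log f dP) ≤ (∫ f·ρ dP)·exp(−∫ log ρ dP). Equality holds for
ρ* = f⁻¹/∫ f⁻¹ dP, so exp(∫ log f dP) is the least element (the infimum) of the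
set of values (∫ f·ρ dP)·exp(−∫ log ρ dP). -/
theorem stmt14 {Ω : Type*} [MeasurableSpace Ω]
    (P : Measure Ω) [IsProbabilityMeasure P]
    (f : Ω → ℝ) (hf : Measurable f) (hfpos : ∀ ω, 0 < f ω)
    (hlogf : Integrable (fun ω => Real.log (f ω)) P)
    (hfinv : Integrable (fun ω => (f ω)⁻¹) P) :
    (∀ ρ : Ω → ℝ, Measurable ρ → (∀ ω, 0 < ρ ω) →
        (∫⁻ ω, ENNReal.ofReal (ρ ω) ∂P) = 1 →
        Integrable (fun ω => Real.log (ρ ω)) P →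
        ENNReal.ofReal
            (Real.exp ((∫ ω, Real.log (f ω) ∂P) + ∫ ω, Real.log (ρ ω) ∂P)) ≤
          ∫⁻ ω, ENNReal.ofReal (f ω * ρ ω) ∂P) ∧
      IsLeast {v : ℝ≥0∞ | ∃ ρ : Ω → ℝ, Measurable ρ ∧ (∀ ω, 0 < ρ ω) ∧
            (∫⁻ ω, ENNReal.ofReal (ρ ω) ∂P) = 1 ∧
            Integrable (fun ω => Real.log (ρ ω)) P ∧
            v = (∫⁻ ω, ENNReal.ofReal (f ω * ρ ω) ∂P) *
                ENNReal.ofReal (Real.exp (-∫ ω, Real.log (ρ ω) ∂P))}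
        (ENNReal.ofReal (Real.exp (∫ ω, Real.log (f ω) ∂P))) ∧
      (ENNReal.ofReal (Real.exp (∫ ω, Real.log (f ω) ∂P)) =
        (∫⁻ ω, ENNReal.ofReal (f ω * ((f ω)⁻¹ / ∫ x, (f x)⁻¹ ∂P)) ∂P) *
          ENNReal.ofReal
            (Real.exp (-∫ ω, Real.log ((f ω)⁻¹ / ∫ x, (f x)⁻¹ ∂P) ∂P))) := by
  -- main inequality
  have main : ∀ ρ : Ω → ℝ, Measurable ρ → (∀ ω, 0 < ρ ω) →
      (∫⁻ ω, ENNReal.ofReal (ρ ω) ∂P) = 1 →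
      Integrable (fun ω => Real.log (ρ ω)) P →
      ENNReal.ofReal
          (Real.exp ((∫ ω, Real.log (f ω) ∂P) + ∫ ω, Real.log (ρ ω) ∂P)) ≤
        ∫⁻ ω, ENNReal.ofReal (f ω * ρ ω) ∂P := by
    intro ρ hρ hρpos hρ1 hlogρ
    have hgpos : ∀ ω, 0 < f ω * ρ ω := fun ω => mul_pos (hfpos ω) (hρpos ω)
    have hlogg : Integrable (fun ω => Real.log (f ω * ρ ω)) P := by
      refine (hlogf.add hlogρ).congr ?_
      exact Filter.Eventually.of_forall fun ω =>
        (Real.log_mul (hfpos ω).ne' (hρpos ω).ne').symm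
    have hint : (∫ ω, Real.log (f ω * ρ ω) ∂P) =
        (∫ ω, Real.log (f ω) ∂P) + ∫ ω, Real.log (ρ ω) ∂P := by
      rw [← integral_add hlogf hlogρ]
      exact integral_congr_ae (Filter.Eventually.of_forall fun ω =>
        Real.log_mul (hfpos ω).ne' (hρpos ω).ne')
    have := jensen_exp_log P (fun ω => f ω * ρ ω) (hf.mul hρ) hgpos hlogg
    rwa [hint] at this
  -- lower-bound
  have lb : ∀ ρ : Ω → ℝ, Measurable ρ → (∀ ω, 0 < ρ ω) →
      (∫⁻ ω, ENNReal.ofReal (ρ ω) ∂P) = 1 →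
      Integrable (fun ω => Real.log (ρ ω)) P →
      ENNReal.ofReal (Real.exp (∫ ω, Real.log (f ω) ∂P)) ≤
        (∫⁻ ω, ENNReal.ofReal (f ω * ρ ω) ∂P) *
          ENNReal.ofReal (Real.exp (-∫ ω, Real.log (ρ ω) ∂P)) := by
    intro ρ hρ hρpos hρ1 hlogρ
    have h := main ρ hρ hρpos hρ1 hlogρ
    have h2 := mul_le_mul_left
      h (ENNReal.ofReal (Real.exp (-∫ ω, Real.log (ρ ω) ∂P)))
    refine le_trans (le_of_eq ?_) h2
    rw [← ENNReal.ofReal_mul (Real.exp_nonneg _), ← Real.exp_add]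
    ring_nf
  -- the optimal density
  set c : ℝ := ∫ x, (f x)⁻¹ ∂P with hc
  have hcpos : 0 < c := by
    refine integral_pos_iff_support_of_nonneg
      (fun ω => (inv_pos.2 (hfpos ω)).le) hfinv |>.2 ?_
    have : (Function.support fun x => (f x)⁻¹) = Set.univ := by
      ext ω; simp [(hfpos ω).ne']
    rw [this]; simp
  set ρs : Ω → ℝ := fun ω => (f ω)⁻¹ / c with hρs
  have hρsmeas : Measurable ρs := (hf.inv).div_const c
  have hρspos : ∀ ω, 0 < ρs ω := fun ω => div_pos (inv_pos.2 (hfpos ω)) hcpos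
  have hρsint : Integrable ρs P := hfinv.div_const c
  have hρs1 : (∫⁻ ω, ENNReal.ofReal (ρs ω) ∂P) = 1 := by
    rw [← ofReal_integral_eq_lintegral_ofReal hρsint
      (Filter.Eventually.of_forall fun ω => (hρspos ω).le)]
    have : (∫ ω, ρs ω ∂P) = c / c := by
      simp only [hρs, integral_div]
      rw [← hc]
    rw [this, div_self hcpos.ne']; simp
  have hlogρs : Integrable (fun ω => Real.log (ρs ω)) P := by
    have : (fun ω => Real.log (ρs ω)) =
        fun ω => -Real.log (f ω) - Real.log c := by
      funext ω
      rw [hρs, Real.log_div (inv_pos.2 (hfpos ω)).ne' hcpos.ne',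
        Real.log_inv]
    rw [this]
    exact (hlogf.neg).sub (integrable_const _)
  have hlogρsint : (∫ ω, Real.log (ρs ω) ∂P) =
      -(∫ ω, Real.log (f ω) ∂P) - Real.log c := by
    have : (fun ω => Real.log (ρs ω)) =
        fun ω => -Real.log (f ω) - Real.log c := by
      funext ω
      rw [hρs, Real.log_div (inv_pos.2 (hfpos ω)).ne' hcpos.ne',
        Real.log_inv]
    rw [this]
    have h1 : (∫ ω, (-Real.log (f ω) - Real.log c) ∂P) =
        (∫ ω, -Real.log (f ω) ∂P) - ∫ _ω, (Real.log c) ∂P :=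
      integral_sub hlogf.neg (integrable_const _)
    rw [h1, integral_neg, integral_const]
    simp
  have hfρs : ∀ ω, f ω * ρs ω = c⁻¹ := by
    intro ω
    rw [hρs]
    field_simp
    exact div_self (hfpos ω).ne'
  have hlint : (∫⁻ ω, ENNReal.ofReal (f ω * ρs ω) ∂P) = ENNReal.ofReal c⁻¹ := by
    have : (fun ω => ENNReal.ofReal (f ω * ρs ω)) =
        fun _ => ENNReal.ofReal c⁻¹ := by
      funext ω; rw [hfρs ω]
    rw [this, lintegral_const]; simp
  have heq : ENNReal.ofReal (Real.exp (∫ ω, Real.log (f ω) ∂P)) =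
      (∫⁻ ω, ENNReal.ofReal (f ω * ρs ω) ∂P) *
        ENNReal.ofReal (Real.exp (-∫ ω, Real.log (ρs ω) ∂P)) := by
    rw [hlint, hlogρsint, ← ENNReal.ofReal_mul (by positivity)]
    congr 1
    rw [neg_sub, sub_neg_eq_add, Real.exp_add, Real.exp_log hcpos,
      ← mul_assoc, inv_mul_cancel₀ hcpos.ne', one_mul]
  refine ⟨main, ⟨⟨ρs, hρsmeas, hρspos, hρs1, hlogρs, heq⟩, ?_⟩, heq⟩
  rintro v ⟨ρ, hρ, hρpos, hρ1, hlogρ, rfl⟩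
  exact lb ρ hρ hρpos hρ1 hlogρ
end

section
/- For every ε > 0 there exists b ∈ ℝ such that U(x) ≤ εx + b for all x > 0; consequently the concave envelope U_c of U is real-valued (finite) at every x ∈ (0,∞), concave, nondecreasing, satisfies U_c ≥ U, and itself obeys the sublinear growth condition lim_{x→∞} U_c(x)/x = 0. -/
open Real Set Filter Topology

/-- Supporting line of a concave function at an interior point of `(0,∞)`. -/
lemma supporting_line (V : ℝ → ℝ) (hV : ConcaveOn ℝ (Set.Ioi 0) V) {x : ℝ} (hx : 0 < x) :
    ∃ a b : ℝ, (∀ y > 0, V y ≤ a * y + b) ∧ a * x + b = V x := by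
  set T : Set ℝ := (fun y => (V x - V y) / (x - y)) '' Set.Ioo 0 x with hT
  have hne : T.Nonempty := ⟨_, ⟨x / 2, ⟨by positivity, by linarith⟩, rfl⟩⟩
  have hbdd : BddBelow T := by
    refine ⟨(V (x + 1) - V x) / (x + 1 - x), ?_⟩
    rintro _ ⟨y, ⟨hy0, hyx⟩, rfl⟩
    exact hV.slope_anti_adjacent (mem_Ioi.2 hy0) (mem_Ioi.2 (by linarith)) hyx (by linarith)
  set a := sInf T with ha
  refine ⟨a, V x - a * x, ?_, by ring⟩
  intro y hy
  rcases lt_trichotomy y x with h | h | h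
  · have hle : a ≤ (V x - V y) / (x - y) := csInf_le hbdd ⟨y, ⟨hy, h⟩, rfl⟩
    have hxy : 0 < x - y := by linarith
    rw [le_div_iff₀ hxy] at hle
    nlinarith
  · subst h; linarith
  · have hle : (V y - V x) / (y - x) ≤ a := by
      refine le_csInf hne ?_
      rintro _ ⟨z, ⟨hz0, hzx⟩, rfl⟩
      exact hV.slope_anti_adjacent (mem_Ioi.2 hz0) (mem_Ioi.2 (lt_trans hx h)) hzx h
    have hxy : 0 < y - x := by linarith
    rw [div_le_iff₀ hxy] at hle
    nlinarith

/-- if U is nondecreasing on (0,∞) with lim_{x→∞} U(x)/x = 0,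
then for every ε > 0 there is b with U(x) ≤ εx + b on (0,∞); consequently U
admits a (finite, real-valued) concave envelope U_c on (0,∞): a smallest
concave majorant, which is nondecreasing and itself satisfies
lim_{x→∞} U_c(x)/x = 0. -/
theorem stmt17 (U : ℝ → ℝ) (hU : MonotoneOn U (Set.Ioi 0))
    (hgrowth : Tendsto (fun x => U x / x) atTop (nhds 0)) :
    (∀ ε > 0, ∃ b : ℝ, ∀ x > 0, U x ≤ ε * x + b) ∧
      ∃ Uc : ℝ → ℝ,
        ConcaveOn ℝ (Set.Ioi 0) Uc ∧
        (∀ x ∈ Set.Ioi (0 : ℝ), U x ≤ Uc x) ∧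
        (∀ V : ℝ → ℝ, ConcaveOn ℝ (Set.Ioi 0) V →
          (∀ x ∈ Set.Ioi (0 : ℝ), U x ≤ V x) →
          ∀ x ∈ Set.Ioi (0 : ℝ), Uc x ≤ V x) ∧
        MonotoneOn Uc (Set.Ioi 0) ∧
        Tendsto (fun x => Uc x / x) atTop (nhds 0) := by
  -- Part 1: affine majorants
  have part1 : ∀ ε > 0, ∃ b : ℝ, ∀ x > 0, U x ≤ ε * x + b := by
    intro ε hε
    have h1 : ∀ᶠ x in atTop, U x / x ≤ ε ∧ 0 < x :=
      (hgrowth.eventually (eventually_le_nhds hε)).and (eventually_gt_atTop 0)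
    rcases eventually_atTop.1 h1 with ⟨M, hM⟩
    have hM0 : 0 < M := (hM M le_rfl).2
    refine ⟨max (U M) 0, ?_⟩
    intro x hx
    rcases le_or_gt x M with h | h
    · have h2 : U x ≤ U M := hU (mem_Ioi.2 hx) (mem_Ioi.2 hM0) h
      have h3 : U x ≤ max (U M) 0 := h2.trans (le_max_left _ _)
      nlinarith
    · have h2 : U x / x ≤ ε := (hM x h.le).1
      rw [div_le_iff₀ hx] at h2
      have : (0:ℝ) ≤ max (U M) 0 := le_max_right _ _
      nlinarith [mul_comm ε x]
  refine ⟨part1, ?_⟩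
  -- the set of affine majorants
  set S : Set (ℝ × ℝ) := {p | ∀ y > 0, U y ≤ p.1 * y + p.2} with hS
  have hSne : S.Nonempty := by
    rcases part1 1 one_pos with ⟨b, hb⟩
    exact ⟨(1, b), hb⟩
  -- all slopes are nonnegative
  have hSpos : ∀ p ∈ S, 0 ≤ p.1 := by
    rintro ⟨a, b⟩ hp
    by_contra hneg
    push_neg at hneg
    set x := max 2 ((U 1 - b) / a + 1) with hx
    have hx2 : (2:ℝ) ≤ x := le_max_left _ _
    have hx1 : (1:ℝ) < x := by linarith
    have h1 : U 1 ≤ U x := hU (mem_Ioi.2 one_pos) (mem_Ioi.2 (by linarith)) hx1.le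
    have h2 : U x ≤ a * x + b := hp x (by linarith)
    have h3 : (U 1 - b) / a + 1 ≤ x := le_max_right _ _
    have h4 : a * ((U 1 - b) / a + 1) ≥ a * x := by nlinarith
    have h5 : a * ((U 1 - b) / a) = U 1 - b := by
      field_simp
      exact mul_div_cancel_left₀ _ (ne_of_lt hneg)
    nlinarith
  set Uc : ℝ → ℝ := fun x => sInf ((fun p : ℝ × ℝ => p.1 * x + p.2) '' S) with hUc
  have hAne : ∀ x : ℝ, ((fun p : ℝ × ℝ => p.1 * x + p.2) '' S).Nonempty :=
    fun x => hSne.image _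
  have hAbdd : ∀ x > 0, BddBelow ((fun p : ℝ × ℝ => p.1 * x + p.2) '' S) := by
    intro x hx
    exact ⟨U x, by rintro _ ⟨p, hp, rfl⟩; exact hp x hx⟩
  -- U ≤ Uc
  have hmaj : ∀ x ∈ Set.Ioi (0:ℝ), U x ≤ Uc x := by
    intro x hx
    exact le_csInf (hAne x) (by rintro _ ⟨p, hp, rfl⟩; exact hp x hx)
  -- Uc ≤ every affine value
  have hle : ∀ p ∈ S, ∀ x > 0, Uc x ≤ p.1 * x + p.2 := by
    intro p hp x hx
    exact csInf_le (hAbdd x hx) ⟨p, hp, rfl⟩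
  -- monotone
  have hmono : MonotoneOn Uc (Set.Ioi 0) := by
    intro x hx y hy hxy
    refine le_csInf (hAne y) ?_
    rintro _ ⟨p, hp, rfl⟩
    have h1 : Uc x ≤ p.1 * x + p.2 := hle p hp x hx
    have h2 : p.1 * x ≤ p.1 * y := mul_le_mul_of_nonneg_left hxy (hSpos p hp)
    show Uc x ≤ p.1 * y + p.2
    linarith
  -- concave
  have hconc : ConcaveOn ℝ (Set.Ioi 0) Uc := by
    refine ⟨convex_Ioi 0, ?_⟩
    intro x hx y hy s t hs ht hst
    have hz : (0:ℝ) < s * x + t * y := by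
      rcases hs.lt_or_eq with h | h
      · have : (0:ℝ) < s * x := mul_pos h hx
        nlinarith [mul_nonneg ht hy.le]
      · have hst' : t = 1 := by linarith
        simp [← h, hst'] at *
        nlinarith
    refine le_csInf (hAne _) ?_
    rintro _ ⟨p, hp, rfl⟩
    have h1 : Uc x ≤ p.1 * x + p.2 := hle p hp x hx
    have h2 : Uc y ≤ p.1 * y + p.2 := hle p hp y hy
    have e1 := mul_le_mul_of_nonneg_left h1 hs
    have e2 := mul_le_mul_of_nonneg_left h2 ht
    have e3 : s * (p.1 * x + p.2) + t * (p.1 * y + p.2) = p.1 * (s * x + t * y) + p.2 := by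
      linear_combination p.2 * hst
    show s • Uc x + t • Uc y ≤ p.1 * (s • x + t • y) + p.2
    simp only [smul_eq_mul]
    linarith
  -- minimality
  have hmin : ∀ V : ℝ → ℝ, ConcaveOn ℝ (Set.Ioi 0) V →
      (∀ x ∈ Set.Ioi (0:ℝ), U x ≤ V x) → ∀ x ∈ Set.Ioi (0:ℝ), Uc x ≤ V x := by
    intro V hV hUV x hx
    rcases supporting_line V hV (mem_Ioi.1 hx) with ⟨a, b, hab, heq⟩
    have hpS : (a, b) ∈ S := fun y hy => (hUV y hy).trans (hab y hy)
    have := hle (a, b) hpS x hx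
    simpa [heq] using this
  -- growth
  have hgr : Tendsto (fun x => Uc x / x) atTop (nhds 0) := by
    rw [tendsto_order]
    constructor
    · intro c hc
      have h1 : Tendsto (fun x : ℝ => U 1 / x) atTop (nhds 0) :=
        tendsto_const_nhds.div_atTop tendsto_id
      filter_upwards [h1.eventually (eventually_gt_nhds hc), eventually_ge_atTop 1]
        with x hx1 hx2
      have hx0 : (0:ℝ) < x := by linarith
      have h2 : U 1 ≤ Uc x :=
        le_trans (hU (mem_Ioi.2 one_pos) (mem_Ioi.2 hx0) hx2) (hmaj x hx0)
      have h3 : U 1 / x ≤ Uc x / x := by gcongr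
      linarith
    · intro c hc
      rcases part1 (c / 2) (by linarith) with ⟨b, hb⟩
      have hpS : (c / 2, b) ∈ S := hb
      have h2 : Tendsto (fun x : ℝ => c / 2 + b / x) atTop (nhds (c / 2 + 0)) :=
        tendsto_const_nhds.add (tendsto_const_nhds.div_atTop tendsto_id)
      rw [add_zero] at h2
      have h3 : ∀ᶠ x in atTop, c / 2 + b / x < c :=
        h2.eventually (eventually_lt_nhds (by linarith))
      filter_upwards [h3, eventually_gt_atTop 0] with x h3x hx0
      have h4 : Uc x ≤ c / 2 * x + b := hle _ hpS x hx0
      have h5 : Uc x / x ≤ (c / 2 * x + b) / x := by gcongr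
      calc Uc x / x ≤ (c / 2 * x + b) / x := h5
        _ = c / 2 + b / x := by field_simp
        _ < c := h3x
  exact ⟨Uc, hconc, hmaj, hmin, hmono, hgr⟩
end
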